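/- arXiv:math/0607150 — 4 statements merged into one kernel-verified Lean document; each statement's English description precedes it below -/
import Mathlib

section
/- Let 1/3 < d_x < 1/2 and 1/3 < d_ε < 1/2. There exists a constant C (depending only on d_x, d_ε) such that for all integers n ≥ M ≥ 1: n^{−1} Σ_{p=−M}^{M} Σ_{q=−M}^{M} Σ_{r=−n+1}^{n−1} (|r|+1)^{2(2d_x−1)} (|r+q−p|+1)^{2(2d_ε−1)} (|r−p|+1)^{d_x+d_ε−1} (|r+q|+1)^{d_x+d_ε−1} ≤ C ( M^{4d_x+4d_ε−1} n^{−1} + M^{4d_x+4d_ε−2} n^{2d_x+2d_ε−2} ). -/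
open Filter Finset Real


-- MVT-type inequality via Bernoulli
lemma fig2_claim1 {b x : ℝ} (hb0 : 0 < b) (hb1 : b ≤ 1) (hx : 0 ≤ x) :
    b * (x + 1) ^ (b - 1) ≤ (x + 1) ^ b - x ^ b := by
  have hx1 : (0:ℝ) < x + 1 := by linarith
  have hs : -1 ≤ -(1 / (x + 1)) := by
    rw [neg_le_neg_iff, div_le_one hx1]; linarith
  have hbern := rpow_one_add_le_one_add_mul_self hs hb0.le hb1
  have h1 : (1 + -(1 / (x + 1))) = x / (x + 1) := by field_simp; ring
  rw [h1, Real.div_rpow hx hx1.le] at hbern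
  have h3 : (x + 1) ^ (b - 1) = (x + 1) ^ b / (x + 1) := by
    rw [Real.rpow_sub hx1, Real.rpow_one]
  have hp : (0:ℝ) < (x + 1) ^ b := Real.rpow_pos_of_pos hx1 b
  rw [h3]
  rw [div_le_iff₀ (Real.rpow_pos_of_pos hx1 b)] at hbern
  have : x ^ b ≤ (1 + b * -(1 / (x + 1))) * (x + 1) ^ b := hbern
  have he : (1 + b * -(1 / (x + 1))) * (x + 1) ^ b
      = (x + 1) ^ b - b * ((x + 1) ^ b / (x + 1)) := by ring
  linarith [he ▸ this]

-- power-sum bound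
lemma fig2_sumpow {a : ℝ} (ha1 : -1 < a) (ha0 : a ≤ 0) (N : ℕ) :
    ∑ j ∈ Finset.range N, ((j : ℝ) + 1) ^ a ≤ (N : ℝ) ^ (a + 1) / (a + 1) := by
  have hb0 : (0:ℝ) < a + 1 := by linarith
  induction N with
  | zero => simp [Real.zero_rpow hb0.ne']
  | succ N ih =>
    rw [Finset.sum_range_succ]
    have hkey := fig2_claim1 hb0 (by linarith) (Nat.cast_nonneg N : (0:ℝ) ≤ N)
    have he : a + 1 - 1 = a := by ring
    rw [he] at hkey
    have hc : ((N:ℝ) + 1) = ((N + 1 : ℕ) : ℝ) := by push_cast; ring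
    rw [← hc]
    rw [le_div_iff₀ hb0] at ih ⊢
    nlinarith [hkey, ih]

-- sum over arbitrary finset of ℕ of antitone power ≤ sum over range of its card
lemma fig2_card_bound {a : ℝ} (ha0 : a ≤ 0) (T : Finset ℕ) :
    ∑ t ∈ T, ((t : ℝ) + 1) ^ a ≤ ∑ j ∈ Finset.range T.card, ((j : ℝ) + 1) ^ a := by
  induction T using Finset.induction_on_max with
  | empty => simp
  | insert t s hts ih =>
    have hnotmem : t ∉ s := fun h => lt_irrefl t (hts t h)
    rw [Finset.sum_insert hnotmem, Finset.card_insert_of_notMem hnotmem,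
      Finset.sum_range_succ]
    have hcard : s.card ≤ t := by
      have hsub : s ⊆ Finset.range t := fun x hx => Finset.mem_range.mpr (hts x hx)
      simpa using Finset.card_le_card hsub
    have hft : ((t : ℝ) + 1) ^ a ≤ ((s.card : ℝ) + 1) ^ a := by
      apply Real.rpow_le_rpow_of_nonpos (by positivity) (by exact_mod_cast by omega) ha0
    linarith [ih]

-- key window lemma over ℤ
lemma fig2_int_bound {a : ℝ} (ha1 : -1 < a) (ha0 : a ≤ 0) (S : Finset ℤ) :
    ∑ k ∈ S, ((|k| : ℝ) + 1) ^ a ≤ 2 * ((S.card : ℝ) ^ (a + 1) / (a + 1)) := by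
  classical
  have hmono : ∀ T : Finset ℕ, T.card ≤ S.card →
      ∑ t ∈ T, ((t : ℝ) + 1) ^ a ≤ (S.card : ℝ) ^ (a + 1) / (a + 1) := by
    intro T hT
    refine (fig2_card_bound ha0 T).trans ?_
    refine (Finset.sum_le_sum_of_subset_of_nonneg
      (Finset.range_subset_range.mpr hT) (fun i _ _ => by positivity)).trans ?_
    exact fig2_sumpow ha1 ha0 S.card
  have hsplit := Finset.sum_filter_add_sum_filter_not S (fun k => 0 ≤ k)
    (fun k => ((|k| : ℝ) + 1) ^ a)
  set Sp := S.filter (fun k => 0 ≤ k) with hSp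
  set Sm := S.filter (fun k => ¬ 0 ≤ k) with hSm
  -- nonneg part
  have hpos : ∑ k ∈ Sp, ((|k| : ℝ) + 1) ^ a ≤ (S.card : ℝ) ^ (a + 1) / (a + 1) := by
    have hinj : Set.InjOn Int.toNat Sp := by
      intro x hx y hy hxy
      have hx0 : 0 ≤ x := (Finset.mem_filter.mp hx).2
      have hy0 : 0 ≤ y := (Finset.mem_filter.mp hy).2
      omega
    have himg : ∑ t ∈ Sp.image Int.toNat, ((t : ℝ) + 1) ^ a
        = ∑ k ∈ Sp, (((k.toNat : ℕ) : ℝ) + 1) ^ a := Finset.sum_image (fun x hx y hy => hinj hx hy)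
    have heq : ∑ k ∈ Sp, ((|k| : ℝ) + 1) ^ a = ∑ t ∈ Sp.image Int.toNat, ((t : ℝ) + 1) ^ a := by
      rw [himg]
      apply Finset.sum_congr rfl
      intro k hk
      have hk0 : 0 ≤ k := (Finset.mem_filter.mp hk).2
      have h2 : ((k.toNat : ℕ) : ℝ) = (k : ℝ) := by
        exact_mod_cast congrArg (Int.cast : ℤ → ℝ) (Int.toNat_of_nonneg hk0)
      rw [h2, abs_of_nonneg (by exact_mod_cast hk0 : (0:ℝ) ≤ (k:ℝ))]
    rw [heq]
    apply hmono
    exact le_trans (Finset.card_image_le) (Finset.card_filter_le _ _)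
  -- neg part
  have hneg : ∑ k ∈ Sm, ((|k| : ℝ) + 1) ^ a ≤ (S.card : ℝ) ^ (a + 1) / (a + 1) := by
    have hinj : Set.InjOn (fun k : ℤ => (-k - 1).toNat) Sm := by
      intro x hx y hy hxy
      have hx0 : ¬ 0 ≤ x := (Finset.mem_filter.mp hx).2
      have hy0 : ¬ 0 ≤ y := (Finset.mem_filter.mp hy).2
      simp only at hxy
      omega
    have himg : ∑ t ∈ Sm.image (fun k : ℤ => (-k - 1).toNat), ((t : ℝ) + 1) ^ a
        = ∑ k ∈ Sm, ((((-k - 1).toNat : ℕ) : ℝ) + 1) ^ a :=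
      Finset.sum_image (fun x hx y hy => hinj hx hy)
    have hle : ∑ k ∈ Sm, ((|k| : ℝ) + 1) ^ a
        ≤ ∑ k ∈ Sm, ((((-k - 1).toNat : ℕ) : ℝ) + 1) ^ a := by
      apply Finset.sum_le_sum
      intro k hk
      have hk0 : ¬ 0 ≤ k := (Finset.mem_filter.mp hk).2
      have h1 : ((( -k - 1).toNat : ℕ) : ℝ) + 1 ≤ (|k| : ℝ) + 1 := by
        have ht : (((-k - 1).toNat : ℕ) : ℝ) = -(k : ℝ) - 1 := by
          exact_mod_cast congrArg (Int.cast : ℤ → ℝ) (Int.toNat_of_nonneg (by omega : (0:ℤ) ≤ -k - 1))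
        have hklt : (k : ℝ) < 0 := by exact_mod_cast (by omega : k < 0)
        rw [ht, abs_of_neg hklt]
        linarith
      exact Real.rpow_le_rpow_of_nonpos (by positivity) h1 ha0
    refine hle.trans ?_
    rw [← himg]
    apply hmono
    exact le_trans (Finset.card_image_le) (Finset.card_filter_le _ _)
  have hnn : 0 ≤ ∑ k ∈ Sm, ((|k| : ℝ) + 1) ^ a :=
    Finset.sum_nonneg fun i _ => by positivity
  linarith [hsplit]

lemma fig2_scale {e c x : ℝ} (he0 : 0 ≤ e) (he1 : e ≤ 1) (hc : 1 ≤ c) (hx : 0 ≤ x) :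
    (c * x) ^ e ≤ c * x ^ e := by
  rw [Real.mul_rpow (by linarith) hx]
  have h : c ^ e ≤ c := by
    calc c ^ e ≤ c ^ (1:ℝ) := Real.rpow_le_rpow_of_exponent_le hc he1
      _ = c := Real.rpow_one c
  exact mul_le_mul_of_nonneg_right h (Real.rpow_nonneg hx e)

lemma fig2_win2 {a : ℝ} (ha1 : -(2/3) ≤ a) (ha0 : a ≤ 0) (S : Finset ℤ) (f : ℤ → ℤ)
    (hf : Set.InjOn f ↑S) {c m : ℝ} (hc : 1 ≤ c) (hm : 1 ≤ m)
    (hK : (S.card : ℝ) ≤ c * m) :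
    ∑ p ∈ S, ((|f p| : ℝ) + 1) ^ a ≤ 6 * c * m ^ (a + 1) := by
  have ha1' : -1 < a := by linarith
  have h1 : ∑ p ∈ S, ((|f p| : ℝ) + 1) ^ a = ∑ k ∈ S.image f, ((|k| : ℝ) + 1) ^ a :=
    (Finset.sum_image (f := fun k : ℤ => ((|k| : ℝ) + 1) ^ a)
      (fun x hx y hy h => hf hx hy h)).symm
  rw [h1]
  refine (fig2_int_bound ha1' ha0 _).trans ?_
  have hcard : ((S.image f).card : ℝ) ≤ c * m :=
    le_trans (by exact_mod_cast Finset.card_image_le) hK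
  have he0 : (0:ℝ) ≤ a + 1 := by linarith
  have hmono : ((S.image f).card : ℝ) ^ (a+1) ≤ (c*m) ^ (a+1) :=
    Real.rpow_le_rpow (Nat.cast_nonneg _) hcard he0
  have hcm : (c*m)^(a+1) ≤ c * m^(a+1) :=
    fig2_scale he0 (by linarith) hc (by linarith)
  have h13 : 2 / (a+1) ≤ 6 := by
    rw [div_le_iff₀ (by linarith : (0:ℝ) < a+1)]; linarith
  calc 2 * (((S.image f).card : ℝ) ^ (a + 1) / (a + 1))
      = (2/(a+1)) * ((S.image f).card : ℝ) ^ (a+1) := by ring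
    _ ≤ 6 * (c * m^(a+1)) :=
        mul_le_mul h13 (hmono.trans hcm) (by positivity) (by norm_num)
    _ = 6 * c * m^(a+1) := by ring

lemma fig2_reorder {β : Type*} [AddCommMonoid β] (s t u : Finset ℤ) (f : ℤ → ℤ → ℤ → β) :
    ∑ p ∈ s, ∑ q ∈ t, ∑ r ∈ u, f p q r = ∑ r ∈ u, ∑ q ∈ t, ∑ p ∈ s, f p q r :=
  calc ∑ p ∈ s, ∑ q ∈ t, ∑ r ∈ u, f p q r
      = ∑ q ∈ t, ∑ p ∈ s, ∑ r ∈ u, f p q r := Finset.sum_comm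
    _ = ∑ q ∈ t, ∑ r ∈ u, ∑ p ∈ s, f p q r := Finset.sum_congr rfl fun q _ => Finset.sum_comm
    _ = ∑ r ∈ u, ∑ q ∈ t, ∑ p ∈ s, f p q r := Finset.sum_comm

lemma fig2_near (dx dε : ℝ)
    (hdx1 : 1 / 3 < dx) (hdx2 : dx < 1 / 2) (hdε1 : 1 / 3 < dε) (hdε2 : dε < 1 / 2)
    (n M : ℕ) (hM : 1 ≤ M) (hMn : M ≤ n) :
    ∑ r ∈ (Finset.Icc (-(n : ℤ) + 1) ((n : ℤ) - 1)).filter (fun r => |r| ≤ 4 * (M:ℤ)),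
      ∑ q ∈ Finset.Icc (-(M : ℤ)) (M : ℤ), ∑ p ∈ Finset.Icc (-(M : ℤ)) (M : ℤ),
        ((|r| : ℝ) + 1) ^ (2 * (2 * dx - 1)) *
          ((|r + q - p| : ℝ) + 1) ^ (2 * (2 * dε - 1)) *
          ((|r - p| : ℝ) + 1) ^ (dx + dε - 1) *
          ((|r + q| : ℝ) + 1) ^ (dx + dε - 1)
      ≤ 17496 * (M : ℝ) ^ (4 * dx + 4 * dε - 1) := by
  have hM0 : (0:ℝ) < M := by exact_mod_cast hM
  have hM1 : (1:ℝ) ≤ M := by exact_mod_cast hM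
  set a1 := 2 * (2 * dx - 1) with ha1def
  set a2 := 2 * (2 * dε - 1) with ha2def
  set a3 := dx + dε - 1 with ha3def
  have ha1l : -(2/3) ≤ a1 := by rw [ha1def]; linarith
  have ha1u : a1 ≤ 0 := by rw [ha1def]; linarith
  have ha2l : -(2/3) ≤ a2 := by rw [ha2def]; linarith
  have ha2u : a2 ≤ 0 := by rw [ha2def]; linarith
  have ha3l : -(2/3) ≤ a3 := by rw [ha3def]; linarith
  have ha3u : a3 ≤ 0 := by rw [ha3def]; linarith
  set I := Finset.Icc (-(M : ℤ)) (M : ℤ) with hIdef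
  set J1 := (Finset.Icc (-(n : ℤ) + 1) ((n : ℤ) - 1)).filter (fun r => |r| ≤ 4 * (M:ℤ))
    with hJ1def
  have hcardI : (I.card : ℝ) ≤ 3 * (M:ℝ) := by
    have h : I.card = 2 * M + 1 := by rw [hIdef, Int.card_Icc]; omega
    rw [h]; push_cast; linarith
  have hcardJ1 : (J1.card : ℝ) ≤ 9 * (M:ℝ) := by
    have hsub : J1 ⊆ Finset.Icc (-(4 * (M:ℤ))) (4 * (M:ℤ)) := by
      intro r hr
      rw [hJ1def, Finset.mem_filter] at hr
      exact Finset.mem_Icc.mpr (abs_le.mp hr.2)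
    have h2 : (Finset.Icc (-(4 * (M:ℤ))) (4 * (M:ℤ))).card = 8 * M + 1 := by
      rw [Int.card_Icc]; omega
    have h3 : J1.card ≤ 8 * M + 1 := h2 ▸ Finset.card_le_card hsub
    calc (J1.card : ℝ) ≤ ((8 * M + 1 : ℕ) : ℝ) := by exact_mod_cast h3
      _ ≤ 9 * (M:ℝ) := by push_cast; linarith
  -- innermost p-sum
  have hp_sum : ∀ r q : ℤ, ∑ p ∈ I, ((|r + q - p| : ℝ) + 1) ^ a2 ≤ 18 * (M:ℝ) ^ (a2 + 1) := by
    intro r q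
    have := fig2_win2 ha2l ha2u I (fun p => r + q - p)
      (fun x _ y _ h => by dsimp at h; omega) (by norm_num : (1:ℝ) ≤ 3) hM1 hcardI
    have h18 : (6:ℝ) * 3 * (M:ℝ) ^ (a2 + 1) = 18 * (M:ℝ) ^ (a2 + 1) := by ring
    rw [h18] at this
    simpa using this
  have hq_sum : ∀ r : ℤ, ∑ q ∈ I, ((|r + q| : ℝ) + 1) ^ a3 ≤ 18 * (M:ℝ) ^ (a3 + 1) := by
    intro r
    have := fig2_win2 ha3l ha3u I (fun q => r + q)
      (fun x _ y _ h => by dsimp at h; omega) (by norm_num : (1:ℝ) ≤ 3) hM1 hcardI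
    have h18 : (6:ℝ) * 3 * (M:ℝ) ^ (a3 + 1) = 18 * (M:ℝ) ^ (a3 + 1) := by ring
    rw [h18] at this
    simpa using this
  have hr_sum : ∑ r ∈ J1, ((|r| : ℝ) + 1) ^ a1 ≤ 54 * (M:ℝ) ^ (a1 + 1) := by
    have := fig2_win2 ha1l ha1u J1 (fun r => r)
      (fun x _ y _ h => h) (by norm_num : (1:ℝ) ≤ 9) hM1 hcardJ1
    calc ∑ r ∈ J1, ((|r| : ℝ) + 1) ^ a1 ≤ 6 * 9 * (M:ℝ) ^ (a1 + 1) := this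
      _ = 54 * (M:ℝ) ^ (a1 + 1) := by ring
  -- step: bound for fixed r
  have hstep : ∀ r : ℤ, ∑ q ∈ I, ∑ p ∈ I,
      ((|r| : ℝ) + 1) ^ a1 * ((|r + q - p| : ℝ) + 1) ^ a2 *
        ((|r - p| : ℝ) + 1) ^ a3 * ((|r + q| : ℝ) + 1) ^ a3
      ≤ ((|r| : ℝ) + 1) ^ a1 * (18 * (M:ℝ) ^ (a2 + 1) * (18 * (M:ℝ) ^ (a3 + 1))) := by
    intro r
    have hq : ∀ q : ℤ, ∑ p ∈ I,
        ((|r| : ℝ) + 1) ^ a1 * ((|r + q - p| : ℝ) + 1) ^ a2 *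
          ((|r - p| : ℝ) + 1) ^ a3 * ((|r + q| : ℝ) + 1) ^ a3
        ≤ ((|r| : ℝ) + 1) ^ a1 * ((|r + q| : ℝ) + 1) ^ a3 * (18 * (M:ℝ) ^ (a2 + 1)) := by
      intro q
      have hpt : ∀ p ∈ I,
          ((|r| : ℝ) + 1) ^ a1 * ((|r + q - p| : ℝ) + 1) ^ a2 *
            ((|r - p| : ℝ) + 1) ^ a3 * ((|r + q| : ℝ) + 1) ^ a3
          ≤ ((|r| : ℝ) + 1) ^ a1 * ((|r + q| : ℝ) + 1) ^ a3 *
            ((|r + q - p| : ℝ) + 1) ^ a2 := by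
        intro p _
        have hC : ((|r - p| : ℝ) + 1) ^ a3 ≤ 1 :=
          Real.rpow_le_one_of_one_le_of_nonpos
            (by have := abs_nonneg ((r:ℝ) - p); linarith) ha3u
        calc ((|r| : ℝ) + 1) ^ a1 * ((|r + q - p| : ℝ) + 1) ^ a2 *
              ((|r - p| : ℝ) + 1) ^ a3 * ((|r + q| : ℝ) + 1) ^ a3
            ≤ ((|r| : ℝ) + 1) ^ a1 * ((|r + q - p| : ℝ) + 1) ^ a2 * 1 *
              ((|r + q| : ℝ) + 1) ^ a3 := by
              gcongr
            _ = ((|r| : ℝ) + 1) ^ a1 * ((|r + q| : ℝ) + 1) ^ a3 *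
              ((|r + q - p| : ℝ) + 1) ^ a2 := by ring
      calc ∑ p ∈ I, ((|r| : ℝ) + 1) ^ a1 * ((|r + q - p| : ℝ) + 1) ^ a2 *
            ((|r - p| : ℝ) + 1) ^ a3 * ((|r + q| : ℝ) + 1) ^ a3
          ≤ ∑ p ∈ I, ((|r| : ℝ) + 1) ^ a1 * ((|r + q| : ℝ) + 1) ^ a3 *
            ((|r + q - p| : ℝ) + 1) ^ a2 := Finset.sum_le_sum hpt
        _ = ((|r| : ℝ) + 1) ^ a1 * ((|r + q| : ℝ) + 1) ^ a3 *
            ∑ p ∈ I, ((|r + q - p| : ℝ) + 1) ^ a2 := by rw [← Finset.mul_sum]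
        _ ≤ ((|r| : ℝ) + 1) ^ a1 * ((|r + q| : ℝ) + 1) ^ a3 *
            (18 * (M:ℝ) ^ (a2 + 1)) := by
            apply mul_le_mul_of_nonneg_left (hp_sum r q) (by positivity)
    calc ∑ q ∈ I, ∑ p ∈ I,
          ((|r| : ℝ) + 1) ^ a1 * ((|r + q - p| : ℝ) + 1) ^ a2 *
            ((|r - p| : ℝ) + 1) ^ a3 * ((|r + q| : ℝ) + 1) ^ a3
        ≤ ∑ q ∈ I, ((|r| : ℝ) + 1) ^ a1 * ((|r + q| : ℝ) + 1) ^ a3 *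
            (18 * (M:ℝ) ^ (a2 + 1)) := Finset.sum_le_sum (fun q _ => hq q)
      _ = ((|r| : ℝ) + 1) ^ a1 * (18 * (M:ℝ) ^ (a2 + 1)) *
            ∑ q ∈ I, ((|r + q| : ℝ) + 1) ^ a3 := by
          rw [Finset.mul_sum]
          apply Finset.sum_congr rfl
          intro q _; ring
      _ ≤ ((|r| : ℝ) + 1) ^ a1 * (18 * (M:ℝ) ^ (a2 + 1)) *
            (18 * (M:ℝ) ^ (a3 + 1)) := by
          apply mul_le_mul_of_nonneg_left (hq_sum r) (by positivity)
      _ = ((|r| : ℝ) + 1) ^ a1 * (18 * (M:ℝ) ^ (a2 + 1) * (18 * (M:ℝ) ^ (a3 + 1))) := by ring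
  calc ∑ r ∈ J1, ∑ q ∈ I, ∑ p ∈ I,
        ((|r| : ℝ) + 1) ^ a1 * ((|r + q - p| : ℝ) + 1) ^ a2 *
          ((|r - p| : ℝ) + 1) ^ a3 * ((|r + q| : ℝ) + 1) ^ a3
      ≤ ∑ r ∈ J1, ((|r| : ℝ) + 1) ^ a1 *
          (18 * (M:ℝ) ^ (a2 + 1) * (18 * (M:ℝ) ^ (a3 + 1))) :=
        Finset.sum_le_sum (fun r _ => hstep r)
    _ = (∑ r ∈ J1, ((|r| : ℝ) + 1) ^ a1) *
          (18 * (M:ℝ) ^ (a2 + 1) * (18 * (M:ℝ) ^ (a3 + 1))) := by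
        rw [Finset.sum_mul]
    _ ≤ 54 * (M:ℝ) ^ (a1 + 1) *
          (18 * (M:ℝ) ^ (a2 + 1) * (18 * (M:ℝ) ^ (a3 + 1))) := by
        apply mul_le_mul_of_nonneg_right hr_sum (by positivity)
    _ = 17496 * ((M:ℝ) ^ (a1 + 1) * (M:ℝ) ^ (a2 + 1) * (M:ℝ) ^ (a3 + 1)) := by ring
    _ = 17496 * (M:ℝ) ^ ((a1 + 1) + (a2 + 1) + (a3 + 1)) := by
        rw [← Real.rpow_add hM0, ← Real.rpow_add hM0]
    _ ≤ 17496 * (M : ℝ) ^ (4 * dx + 4 * dε - 1) := by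
        have : (a1 + 1) + (a2 + 1) + (a3 + 1) ≤ 4 * dx + 4 * dε - 1 := by
          rw [ha1def, ha2def, ha3def]; linarith
        have h := Real.rpow_le_rpow_of_exponent_le hM1 this
        linarith

lemma fig2_far (dx dε : ℝ)
    (hdx1 : 1 / 3 < dx) (hdx2 : dx < 1 / 2) (hdε1 : 1 / 3 < dε) (hdε2 : dε < 1 / 2)
    (n M : ℕ) (hM : 1 ≤ M) (hMn : M ≤ n) :
    ∑ r ∈ (Finset.Icc (-(n : ℤ) + 1) ((n : ℤ) - 1)).filter (fun r => ¬ |r| ≤ 4 * (M:ℤ)),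
      ∑ q ∈ Finset.Icc (-(M : ℤ)) (M : ℤ), ∑ p ∈ Finset.Icc (-(M : ℤ)) (M : ℤ),
        ((|r| : ℝ) + 1) ^ (2 * (2 * dx - 1)) *
          ((|r + q - p| : ℝ) + 1) ^ (2 * (2 * dε - 1)) *
          ((|r - p| : ℝ) + 1) ^ (dx + dε - 1) *
          ((|r + q| : ℝ) + 1) ^ (dx + dε - 1)
      ≤ 864 * (M : ℝ) ^ (4 * dx + 4 * dε - 2) * (n : ℝ) ^ (2 * dx + 2 * dε - 1) := by
  have hM0 : (0:ℝ) < M := by exact_mod_cast hM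
  have hM1 : (1:ℝ) ≤ M := by exact_mod_cast hM
  have hn1 : 1 ≤ n := le_trans hM hMn
  have hn0 : (0:ℝ) < n := by exact_mod_cast hn1
  have hnR : (1:ℝ) ≤ n := by exact_mod_cast hn1
  set a1 := 2 * (2 * dx - 1) with ha1def
  set a2 := 2 * (2 * dε - 1) with ha2def
  set a3 := dx + dε - 1 with ha3def
  have ha1u : a1 ≤ 0 := by rw [ha1def]; linarith
  have ha2u : a2 ≤ 0 := by rw [ha2def]; linarith
  have ha3u : a3 ≤ 0 := by rw [ha3def]; linarith
  set I := Finset.Icc (-(M : ℤ)) (M : ℤ) with hIdef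
  set J2 := (Finset.Icc (-(n : ℤ) + 1) ((n : ℤ) - 1)).filter (fun r => ¬ |r| ≤ 4 * (M:ℤ))
    with hJ2def
  have hcardI : (I.card : ℝ) ≤ 3 * (M:ℝ) := by
    have h : I.card = 2 * M + 1 := by rw [hIdef, Int.card_Icc]; omega
    rw [h]; push_cast; linarith
  have hcardJ2 : (J2.card : ℝ) ≤ 2 * (n:ℝ) := by
    have hsub : J2 ⊆ Finset.Icc (-(n : ℤ) + 1) ((n : ℤ) - 1) := Finset.filter_subset _ _
    have h2 : (Finset.Icc (-(n : ℤ) + 1) ((n : ℤ) - 1)).card = 2 * n - 1 := by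
      rw [Int.card_Icc]; omega
    have h3 : J2.card ≤ 2 * n - 1 := h2 ▸ Finset.card_le_card hsub
    calc (J2.card : ℝ) ≤ ((2 * n - 1 : ℕ) : ℝ) := by exact_mod_cast h3
      _ ≤ 2 * (n:ℝ) := by
          have : (2 * n - 1 : ℕ) ≤ 2 * n := by omega
          calc ((2 * n - 1 : ℕ) : ℝ) ≤ ((2 * n : ℕ) : ℝ) := by exact_mod_cast this
            _ = 2 * (n:ℝ) := by push_cast; ring
  -- pointwise bound on the far region
  have hpt : ∀ r ∈ J2, ∀ q ∈ I, ∀ p ∈ I,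
      ((|r| : ℝ) + 1) ^ a1 * ((|r + q - p| : ℝ) + 1) ^ a2 *
        ((|r - p| : ℝ) + 1) ^ a3 * ((|r + q| : ℝ) + 1) ^ a3
      ≤ 8 * (M:ℝ) ^ (4 * dx + 4 * dε - 4) * ((|r| : ℝ) + 1) ^ (2 * dx + 2 * dε - 2) := by
    intro r hr q hq p hp
    rw [hJ2def, Finset.mem_filter] at hr
    rw [hIdef, Finset.mem_Icc] at hq hp
    have hrM : 4 * (M:ℤ) + 1 ≤ |r| := by omega
    -- real versions
    have hrMR : 4 * (M:ℝ) + 1 ≤ |(r:ℝ)| := by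
      have := hrM
      have h' : ((4 * (M:ℤ) + 1 : ℤ) : ℝ) ≤ ((|r| : ℤ) : ℝ) := by exact_mod_cast this
      simpa [Int.cast_abs] using h'
    have hpR : |(p:ℝ)| ≤ (M:ℝ) := by
      have : |p| ≤ (M:ℤ) := abs_le.mpr ⟨hp.1, hp.2⟩
      have h' : ((|p| : ℤ) : ℝ) ≤ ((M:ℤ) : ℝ) := by exact_mod_cast this
      simpa [Int.cast_abs] using h'
    have hqR : |(q:ℝ)| ≤ (M:ℝ) := by
      have : |q| ≤ (M:ℤ) := abs_le.mpr ⟨hq.1, hq.2⟩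
      have h' : ((|q| : ℤ) : ℝ) ≤ ((M:ℤ) : ℝ) := by exact_mod_cast this
      simpa [Int.cast_abs] using h'
    set X : ℝ := |(r:ℝ)| + 1 with hXdef
    have hX0 : (0:ℝ) < X := by have := abs_nonneg (r:ℝ); rw [hXdef]; linarith
    have hX2 : X / 2 > 0 := by linarith
    -- |r - p| + 1 ≥ X/2 etc.
    have h1 : X / 2 ≤ |(r:ℝ) - (p:ℝ)| + 1 := by
      have := abs_sub_abs_le_abs_sub (r:ℝ) (p:ℝ)
      rw [hXdef]; linarith [abs_nonneg ((r:ℝ) - p)]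
    have h2 : X / 2 ≤ |(r:ℝ) + (q:ℝ)| + 1 := by
      have := abs_sub_abs_le_abs_sub (r:ℝ) (-(q:ℝ))
      rw [hXdef]
      simp only [sub_neg_eq_add, abs_neg] at this
      linarith
    have h3 : X / 2 ≤ |(r:ℝ) + (q:ℝ) - (p:ℝ)| + 1 := by
      have ha := abs_sub_abs_le_abs_sub (r:ℝ) ((p:ℝ) - q)
      have hb : (r:ℝ) - ((p:ℝ) - q) = (r:ℝ) + q - p := by ring
      rw [hb] at ha
      have hc : |(p:ℝ) - q| ≤ 2 * M := by
        have := abs_sub (p:ℝ) (q:ℝ)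
        calc |(p:ℝ) - q| ≤ |(p:ℝ)| + |(q:ℝ)| := abs_sub _ _
          _ ≤ 2 * M := by linarith
      rw [hXdef]; linarith
    -- each negative-exponent factor ≤ 2 * X^exp
    have hfac : ∀ (y : ℝ) (a : ℝ), X / 2 ≤ y + 1 → a ≤ 0 → -1 ≤ a → 0 ≤ y →
        (y + 1) ^ a ≤ 2 * X ^ a := by
      intro y a hy ha0 ham1 hy0
      have hy1 : (0:ℝ) < y + 1 := by linarith
      calc (y + 1) ^ a ≤ (X / 2) ^ a := Real.rpow_le_rpow_of_nonpos hX2 hy ha0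
        _ = X ^ a / 2 ^ a := Real.div_rpow hX0.le (by norm_num : (0:ℝ) ≤ 2) a
        _ = X ^ a * (2:ℝ) ^ (-a) := by
            rw [Real.rpow_neg (by norm_num)]; ring
        _ ≤ X ^ a * 2 := by
            have h2a : (2:ℝ) ^ (-a) ≤ 2 := by
              calc (2:ℝ) ^ (-a) ≤ (2:ℝ) ^ (1:ℝ) :=
                Real.rpow_le_rpow_of_exponent_le one_le_two (by linarith)
                _ = 2 := Real.rpow_one 2
            exact mul_le_mul_of_nonneg_left h2a (Real.rpow_nonneg hX0.le a)
        _ = 2 * X ^ a := by ring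
    have hB : (|(r:ℝ) + q - p| + 1) ^ a2 ≤ 2 * X ^ a2 :=
      hfac _ _ h3 ha2u (by rw [ha2def]; linarith) (abs_nonneg _)
    have hC : (|(r:ℝ) - p| + 1) ^ a3 ≤ 2 * X ^ a3 :=
      hfac _ _ h1 ha3u (by rw [ha3def]; linarith) (abs_nonneg _)
    have hD : (|(r:ℝ) + q| + 1) ^ a3 ≤ 2 * X ^ a3 :=
      hfac _ _ h2 ha3u (by rw [ha3def]; linarith) (abs_nonneg _)
    have hMX : (M:ℝ) ≤ X := by rw [hXdef]; linarith
    calc X ^ a1 * (|(r:ℝ) + q - p| + 1) ^ a2 *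
          (|(r:ℝ) - p| + 1) ^ a3 * (|(r:ℝ) + q| + 1) ^ a3
        ≤ X ^ a1 * (2 * X ^ a2) * (2 * X ^ a3) * (2 * X ^ a3) := by
          gcongr <;> positivity
      _ = 8 * (X ^ a1 * X ^ a2 * X ^ a3 * X ^ a3) := by ring
      _ = 8 * X ^ (a1 + a2 + a3 + a3) := by
          rw [← Real.rpow_add hX0, ← Real.rpow_add hX0, ← Real.rpow_add hX0]
      _ = 8 * (X ^ (4 * dx + 4 * dε - 4) * X ^ (2 * dx + 2 * dε - 2)) := by
          rw [← Real.rpow_add hX0]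
          congr 1
          rw [ha1def, ha2def, ha3def]
          ring_nf
      _ ≤ 8 * ((M:ℝ) ^ (4 * dx + 4 * dε - 4) * X ^ (2 * dx + 2 * dε - 2)) := by
          have hx := Real.rpow_le_rpow_of_nonpos hM0 hMX
            (by linarith : 4 * dx + 4 * dε - 4 ≤ 0)
          have hxx : (0:ℝ) ≤ X ^ (2 * dx + 2 * dε - 2) := Real.rpow_nonneg hX0.le _
          exact mul_le_mul_of_nonneg_left
            (mul_le_mul_of_nonneg_right hx hxx) (by norm_num)
      _ = 8 * (M:ℝ) ^ (4 * dx + 4 * dε - 4) * X ^ (2 * dx + 2 * dε - 2) := by ring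
  -- sum the pointwise bound
  have hsum_r : ∑ r ∈ J2, ((|r| : ℝ) + 1) ^ (2 * dx + 2 * dε - 2)
      ≤ 12 * (n:ℝ) ^ (2 * dx + 2 * dε - 1) := by
    have := fig2_win2 (a := 2 * dx + 2 * dε - 2) (by linarith) (by linarith)
      J2 (fun r => r) (fun x _ y _ h => h) (by norm_num : (1:ℝ) ≤ 2) hnR hcardJ2
    have he : 2 * dx + 2 * dε - 2 + 1 = 2 * dx + 2 * dε - 1 := by ring
    rw [he] at this
    have h12 : (6:ℝ) * 2 * (n:ℝ) ^ (2 * dx + 2 * dε - 1)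
        = 12 * (n:ℝ) ^ (2 * dx + 2 * dε - 1) := by ring
    rw [h12] at this
    simpa using this
  have hinner : ∀ r ∈ J2, ∑ q ∈ I, ∑ p ∈ I,
      ((|r| : ℝ) + 1) ^ a1 * ((|r + q - p| : ℝ) + 1) ^ a2 *
        ((|r - p| : ℝ) + 1) ^ a3 * ((|r + q| : ℝ) + 1) ^ a3
      ≤ (3 * (M:ℝ)) * ((3 * (M:ℝ)) *
          (8 * (M:ℝ) ^ (4 * dx + 4 * dε - 4) * ((|r| : ℝ) + 1) ^ (2 * dx + 2 * dε - 2))) := by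
    intro r hr
    have hin : ∀ q ∈ I, ∑ p ∈ I,
        ((|r| : ℝ) + 1) ^ a1 * ((|r + q - p| : ℝ) + 1) ^ a2 *
          ((|r - p| : ℝ) + 1) ^ a3 * ((|r + q| : ℝ) + 1) ^ a3
        ≤ (3 * (M:ℝ)) *
            (8 * (M:ℝ) ^ (4 * dx + 4 * dε - 4) * ((|r| : ℝ) + 1) ^ (2 * dx + 2 * dε - 2)) := by
      intro q hq
      have hb := fun p hp => hpt r hr q hq p hp
      calc ∑ p ∈ I, ((|r| : ℝ) + 1) ^ a1 * ((|r + q - p| : ℝ) + 1) ^ a2 *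
            ((|r - p| : ℝ) + 1) ^ a3 * ((|r + q| : ℝ) + 1) ^ a3
          ≤ ∑ p ∈ I, 8 * (M:ℝ) ^ (4 * dx + 4 * dε - 4) *
              ((|r| : ℝ) + 1) ^ (2 * dx + 2 * dε - 2) := Finset.sum_le_sum hb
        _ = (I.card : ℝ) * (8 * (M:ℝ) ^ (4 * dx + 4 * dε - 4) *
              ((|r| : ℝ) + 1) ^ (2 * dx + 2 * dε - 2)) := by
            rw [Finset.sum_const, nsmul_eq_mul]
        _ ≤ (3 * (M:ℝ)) * (8 * (M:ℝ) ^ (4 * dx + 4 * dε - 4) *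
              ((|r| : ℝ) + 1) ^ (2 * dx + 2 * dε - 2)) := by
            apply mul_le_mul_of_nonneg_right hcardI (by positivity)
    calc ∑ q ∈ I, ∑ p ∈ I,
          ((|r| : ℝ) + 1) ^ a1 * ((|r + q - p| : ℝ) + 1) ^ a2 *
            ((|r - p| : ℝ) + 1) ^ a3 * ((|r + q| : ℝ) + 1) ^ a3
        ≤ ∑ q ∈ I, (3 * (M:ℝ)) *
            (8 * (M:ℝ) ^ (4 * dx + 4 * dε - 4) *
              ((|r| : ℝ) + 1) ^ (2 * dx + 2 * dε - 2)) := Finset.sum_le_sum hin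
      _ = (I.card : ℝ) * ((3 * (M:ℝ)) *
            (8 * (M:ℝ) ^ (4 * dx + 4 * dε - 4) *
              ((|r| : ℝ) + 1) ^ (2 * dx + 2 * dε - 2))) := by
          rw [Finset.sum_const, nsmul_eq_mul]
      _ ≤ (3 * (M:ℝ)) * ((3 * (M:ℝ)) *
            (8 * (M:ℝ) ^ (4 * dx + 4 * dε - 4) *
              ((|r| : ℝ) + 1) ^ (2 * dx + 2 * dε - 2))) := by
          apply mul_le_mul_of_nonneg_right hcardI (by positivity)
  calc ∑ r ∈ J2, ∑ q ∈ I, ∑ p ∈ I,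
        ((|r| : ℝ) + 1) ^ a1 * ((|r + q - p| : ℝ) + 1) ^ a2 *
          ((|r - p| : ℝ) + 1) ^ a3 * ((|r + q| : ℝ) + 1) ^ a3
      ≤ ∑ r ∈ J2, (3 * (M:ℝ)) * ((3 * (M:ℝ)) *
          (8 * (M:ℝ) ^ (4 * dx + 4 * dε - 4) *
            ((|r| : ℝ) + 1) ^ (2 * dx + 2 * dε - 2))) := Finset.sum_le_sum hinner
    _ = (72 * (M:ℝ) * (M:ℝ) * (M:ℝ) ^ (4 * dx + 4 * dε - 4)) *
          ∑ r ∈ J2, ((|r| : ℝ) + 1) ^ (2 * dx + 2 * dε - 2) := by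
        rw [Finset.mul_sum]
        apply Finset.sum_congr rfl
        intro r _; ring
    _ ≤ (72 * (M:ℝ) * (M:ℝ) * (M:ℝ) ^ (4 * dx + 4 * dε - 4)) *
          (12 * (n:ℝ) ^ (2 * dx + 2 * dε - 1)) := by
        apply mul_le_mul_of_nonneg_left hsum_r (by positivity)
    _ = 864 * ((M:ℝ) * (M:ℝ) * (M:ℝ) ^ (4 * dx + 4 * dε - 4)) *
          (n:ℝ) ^ (2 * dx + 2 * dε - 1) := by ring
    _ = 864 * (M : ℝ) ^ (4 * dx + 4 * dε - 2) * (n : ℝ) ^ (2 * dx + 2 * dε - 1) := by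
        congr 2
        have : (M:ℝ) * (M:ℝ) * (M:ℝ) ^ (4 * dx + 4 * dε - 4)
            = (M:ℝ) ^ (1:ℝ) * (M:ℝ) ^ (1:ℝ) * (M:ℝ) ^ (4 * dx + 4 * dε - 4) := by
          rw [Real.rpow_one]
        rw [this, ← Real.rpow_add hM0, ← Real.rpow_add hM0]
        congr 1
        ring

/-- the bound for the connected-diagram term
`γ_xx²(r)γ_εε²(r+q-p)γ_εx(r-p)γ_xε(r+q)` (Figure 2) in Part III of the proof of
Lemma 1, for `1/3 < d_x, d_ε < 1/2`. -/
theorem figure2_diagram_bound (dx dε : ℝ)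
    (hdx1 : 1 / 3 < dx) (hdx2 : dx < 1 / 2) (hdε1 : 1 / 3 < dε) (hdε2 : dε < 1 / 2) :
    ∃ C : ℝ, 0 < C ∧ ∀ n M : ℕ, 1 ≤ M → M ≤ n →
      (n : ℝ)⁻¹ *
          ∑ p ∈ Finset.Icc (-(M : ℤ)) (M : ℤ),
            ∑ q ∈ Finset.Icc (-(M : ℤ)) (M : ℤ),
              ∑ r ∈ Finset.Icc (-(n : ℤ) + 1) ((n : ℤ) - 1),
                ((|r| : ℝ) + 1) ^ (2 * (2 * dx - 1)) *
                  ((|r + q - p| : ℝ) + 1) ^ (2 * (2 * dε - 1)) *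
                  ((|r - p| : ℝ) + 1) ^ (dx + dε - 1) *
                  ((|r + q| : ℝ) + 1) ^ (dx + dε - 1)
        ≤ C * ((M : ℝ) ^ (4 * dx + 4 * dε - 1) * (n : ℝ)⁻¹ +
            (M : ℝ) ^ (4 * dx + 4 * dε - 2) * (n : ℝ) ^ (2 * dx + 2 * dε - 2)) := by
  refine ⟨17496, by norm_num, ?_⟩
  intro n M hM hMn
  have hn1 : 1 ≤ n := le_trans hM hMn
  have hn0 : (0:ℝ) < n := by exact_mod_cast hn1
  set I := Finset.Icc (-(M : ℤ)) (M : ℤ) with hIdef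
  set J := Finset.Icc (-(n : ℤ) + 1) ((n : ℤ) - 1) with hJdef
  -- the summand
  set F : ℤ → ℤ → ℤ → ℝ := fun p q r =>
    ((|r| : ℝ) + 1) ^ (2 * (2 * dx - 1)) *
      ((|r + q - p| : ℝ) + 1) ^ (2 * (2 * dε - 1)) *
      ((|r - p| : ℝ) + 1) ^ (dx + dε - 1) *
      ((|r + q| : ℝ) + 1) ^ (dx + dε - 1) with hFdef
  have hS : ∑ p ∈ I, ∑ q ∈ I, ∑ r ∈ J, F p q r
      ≤ 17496 * (M : ℝ) ^ (4 * dx + 4 * dε - 1) +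
        864 * (M : ℝ) ^ (4 * dx + 4 * dε - 2) * (n : ℝ) ^ (2 * dx + 2 * dε - 1) := by
    calc ∑ p ∈ I, ∑ q ∈ I, ∑ r ∈ J, F p q r
        = ∑ r ∈ J, ∑ q ∈ I, ∑ p ∈ I, F p q r := fig2_reorder I I J F
      _ = (∑ r ∈ J.filter (fun r => |r| ≤ 4 * (M:ℤ)), ∑ q ∈ I, ∑ p ∈ I, F p q r) +
          ∑ r ∈ J.filter (fun r => ¬ |r| ≤ 4 * (M:ℤ)), ∑ q ∈ I, ∑ p ∈ I, F p q r :=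
          (Finset.sum_filter_add_sum_filter_not J _ _).symm
      _ ≤ 17496 * (M : ℝ) ^ (4 * dx + 4 * dε - 1) +
          864 * (M : ℝ) ^ (4 * dx + 4 * dε - 2) * (n : ℝ) ^ (2 * dx + 2 * dε - 1) :=
          add_le_add (fig2_near dx dε hdx1 hdx2 hdε1 hdε2 n M hM hMn)
            (fig2_far dx dε hdx1 hdx2 hdε1 hdε2 n M hM hMn)
  have hM0 : (0:ℝ) < M := by exact_mod_cast hM
  have hnpow : (n:ℝ) ^ (2 * dx + 2 * dε - 1) * (n:ℝ)⁻¹ = (n:ℝ) ^ (2 * dx + 2 * dε - 2) := by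
    rw [show (n:ℝ)⁻¹ = (n:ℝ) ^ (-1:ℝ) from (Real.rpow_neg_one _).symm,
      ← Real.rpow_add hn0]
    congr 1
    ring
  have h0 : (0:ℝ) ≤ (M:ℝ) ^ (4 * dx + 4 * dε - 2) * (n:ℝ) ^ (2 * dx + 2 * dε - 2) := by
    positivity
  calc (n : ℝ)⁻¹ * ∑ p ∈ I, ∑ q ∈ I, ∑ r ∈ J, F p q r
      ≤ (n : ℝ)⁻¹ * (17496 * (M : ℝ) ^ (4 * dx + 4 * dε - 1) +
          864 * (M : ℝ) ^ (4 * dx + 4 * dε - 2) * (n : ℝ) ^ (2 * dx + 2 * dε - 1)) :=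
        mul_le_mul_of_nonneg_left hS (inv_nonneg.mpr hn0.le)
    _ = 17496 * ((M : ℝ) ^ (4 * dx + 4 * dε - 1) * (n : ℝ)⁻¹) +
        864 * ((M : ℝ) ^ (4 * dx + 4 * dε - 2) *
          ((n : ℝ) ^ (2 * dx + 2 * dε - 1) * (n : ℝ)⁻¹)) := by ring
    _ = 17496 * ((M : ℝ) ^ (4 * dx + 4 * dε - 1) * (n : ℝ)⁻¹) +
        864 * ((M : ℝ) ^ (4 * dx + 4 * dε - 2) * (n : ℝ) ^ (2 * dx + 2 * dε - 2)) := by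
        rw [hnpow]
    _ ≤ 17496 * ((M : ℝ) ^ (4 * dx + 4 * dε - 1) * (n : ℝ)⁻¹ +
        (M : ℝ) ^ (4 * dx + 4 * dε - 2) * (n : ℝ) ^ (2 * dx + 2 * dε - 2)) := by
        linarith
end

section
/- Let 1/3 < d_x < 1/2 and 1/3 < d_ε < 1/2. There exists a constant C (depending only on d_x, d_ε) such that for all integers n ≥ M ≥ 1: n^{−1} Σ_{p=−M}^{M} (|p|+1)^{2(d_x+d_ε−1)} Σ_{q=−M}^{M} (|q|+1)^{2(d_x+d_ε−1)} Σ_{r=−n+1}^{n−1} (|r|+1)^{2d_x−1} (|r+q−p|+1)^{2d_ε−1} ≤ C ( M^{4d_x+4d_ε−1} n^{−1} + M^{4d_x+4d_ε−2} n^{2d_x+2d_ε−2} ). -/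
open Filter Finset

-- weighted AM-GM consequence: for 0<p≤1, k≥0: p*(k+1)^(p-1) ≤ (k+1)^p - k^p
lemma rpow_diff_lower {p : ℝ} (hp0 : 0 < p) (hp1 : p ≤ 1) {k : ℝ} (hk : 0 ≤ k) :
    p * (k + 1) ^ (p - 1) ≤ (k + 1) ^ p - k ^ p := by
  have hk1 : (0:ℝ) < k + 1 := by linarith
  set t : ℝ := k / (k + 1) with ht
  have ht0 : 0 ≤ t := div_nonneg hk hk1.le
  have hgm : t ^ p * (1:ℝ) ^ (1 - p) ≤ p * t + (1 - p) * 1 :=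
    Real.geom_mean_le_arith_mean2_weighted hp0.le (by linarith) ht0 zero_le_one (by ring)
  have htp : t ^ p ≤ p * t + (1 - p) := by
    simpa using hgm
  have hkt : k = (k + 1) * t := by
    rw [ht]; field_simp [hk1.ne']
  have hkp : k ^ p = (k + 1) ^ p * t ^ p := by
    conv_lhs => rw [hkt]
    rw [Real.mul_rpow hk1.le ht0]
  have h1 : (k + 1) ^ p - k ^ p = (k + 1) ^ p * (1 - t ^ p) := by
    rw [hkp]; ring
  have h2 : p * (1 - t) ≤ 1 - t ^ p := by linarith
  have h3 : 1 - t = 1 / (k + 1) := by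
    rw [ht]; field_simp [hk1.ne']; ring
  have hpos : (0:ℝ) < (k + 1) ^ p := Real.rpow_pos_of_pos hk1 p
  calc p * (k + 1) ^ (p - 1) = (k + 1) ^ p * (p * (1 - t)) := by
        rw [h3, Real.rpow_sub hk1, Real.rpow_one]; field_simp
    _ ≤ (k + 1) ^ p * (1 - t ^ p) := by
        exact mul_le_mul_of_nonneg_left h2 hpos.le
    _ = (k + 1) ^ p - k ^ p := h1.symm

lemma sum_rpow_le {c : ℝ} (hc0 : -1 < c) (hc1 : c < 0) (T : ℕ) :
    ∑ k ∈ Finset.range (T + 1), ((k : ℝ) + 1) ^ c ≤ (c + 1)⁻¹ * ((T : ℝ) + 1) ^ (c + 1) := by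
  have hp0 : (0:ℝ) < c + 1 := by linarith
  have key : (c + 1) * ∑ k ∈ Finset.range (T + 1), ((k : ℝ) + 1) ^ c ≤ ((T:ℝ) + 1) ^ (c + 1) := by
    rw [Finset.mul_sum]
    have := Finset.sum_range_sub (f := fun k : ℕ => ((k : ℝ)) ^ (c + 1)) (T + 1)
    calc ∑ k ∈ Finset.range (T + 1), (c + 1) * ((k : ℝ) + 1) ^ c
        ≤ ∑ k ∈ Finset.range (T + 1), ((((k+1) : ℕ) : ℝ) ^ (c+1) - ((k:ℕ):ℝ) ^ (c+1)) := by
          apply Finset.sum_le_sum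
          intro k _
          have := rpow_diff_lower (p := c + 1) hp0 (by linarith) (k := (k:ℝ)) (Nat.cast_nonneg k)
          push_cast
          simpa using this
      _ = (((T+1 : ℕ)) : ℝ) ^ (c+1) - ((0:ℕ):ℝ) ^ (c+1) := this
      _ = ((T:ℝ) + 1) ^ (c + 1) := by
          rw [Nat.cast_zero, Real.zero_rpow (by linarith)]; push_cast; ring_nf
  have : ∑ k ∈ Finset.range (T + 1), ((k : ℝ) + 1) ^ c
      = (c+1)⁻¹ * ((c + 1) * ∑ k ∈ Finset.range (T + 1), ((k : ℝ) + 1) ^ c) := by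
    field_simp
  rw [this]
  exact mul_le_mul_of_nonneg_left key (by positivity)

lemma sym_sum {c : ℝ} (hc1 : c < 0) (T : ℕ) :
    ∑ t ∈ Finset.Icc (-(T : ℤ)) (T : ℤ), ((|t| : ℝ) + 1) ^ c
      ≤ 2 * ∑ k ∈ Finset.range (T + 1), ((k : ℝ) + 1) ^ c := by
  induction T with
  | zero => simp
  | succ T ih =>
    have hset : Finset.Icc (-((T+1 : ℕ) : ℤ)) ((T+1 : ℕ) : ℤ)
        = insert (-((T:ℤ)+1)) (insert ((T:ℤ)+1) (Finset.Icc (-(T:ℤ)) (T:ℤ))) := by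
      ext x
      simp only [Finset.mem_Icc, Finset.mem_insert]
      push_cast
      omega
    have h1 : (-((T:ℤ)+1)) ∉ insert ((T:ℤ)+1) (Finset.Icc (-(T:ℤ)) (T:ℤ)) := by
      simp only [Finset.mem_insert, Finset.mem_Icc]
      omega
    have h2 : ((T:ℤ)+1) ∉ Finset.Icc (-(T:ℤ)) (T:ℤ) := by
      simp only [Finset.mem_Icc]; omega
    rw [hset, Finset.sum_insert h1, Finset.sum_insert h2, Finset.sum_range_succ]
    have hT1 : (0:ℝ) ≤ (T:ℝ) + 1 := by positivity
    push_cast [abs_neg, abs_of_nonneg hT1]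
    ring_nf
    ring_nf at ih
    linarith [ih]

-- product bound: x^a*y^b ≤ x^(a+b)+y^(a+b) for bases ≥ 1, exponents <0
lemma prod_rpow_le {a b x y : ℝ} (ha : a < 0) (hb : b < 0) (hx : 1 ≤ x) (hy : 1 ≤ y) :
    x ^ a * y ^ b ≤ x ^ (a + b) + y ^ (a + b) := by
  have hx0 : (0:ℝ) < x := by linarith
  have hy0 : (0:ℝ) < y := by linarith
  rcases le_total x y with h | h
  · have h1 : y ^ b ≤ x ^ b := Real.rpow_le_rpow_of_nonpos hx0 h hb.le
    have : x ^ a * y ^ b ≤ x ^ a * x ^ b :=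
      mul_le_mul_of_nonneg_left h1 (Real.rpow_nonneg hx0.le a)
    rw [← Real.rpow_add hx0] at this
    have := this.trans (le_add_of_nonneg_right (Real.rpow_nonneg hy0.le (a+b)))
    exact this
  · have h1 : x ^ a ≤ y ^ a := Real.rpow_le_rpow_of_nonpos hy0 h ha.le
    have : x ^ a * y ^ b ≤ y ^ a * y ^ b :=
      mul_le_mul_of_nonneg_right h1 (Real.rpow_nonneg hy0.le b)
    rw [← Real.rpow_add hy0] at this
    exact this.trans (le_add_of_nonneg_left (Real.rpow_nonneg hx0.le (a+b)))

-- shifted sum bound via image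
lemma shift_sum_le {F : ℤ → ℝ} (hF : ∀ t, 0 ≤ F t) (A B C D s : ℤ)
    (h : ∀ r, A ≤ r → r ≤ B → C ≤ r + s ∧ r + s ≤ D) :
    ∑ r ∈ Finset.Icc A B, F (r + s) ≤ ∑ t ∈ Finset.Icc C D, F t := by
  have hinj : ∀ x ∈ Finset.Icc A B, ∀ y ∈ Finset.Icc A B,
      (fun r : ℤ => r + s) x = (fun r : ℤ => r + s) y → x = y := by
    intro x _ y _ h
    have h' : x + s = y + s := h
    omega
  rw [← Finset.sum_image hinj]
  apply Finset.sum_le_sum_of_subset_of_nonneg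
  · intro t ht
    simp only [Finset.mem_image, Finset.mem_Icc] at ht ⊢
    obtain ⟨r, ⟨hr1, hr2⟩, rfl⟩ := ht
    exact h r hr1 hr2
  · intro t _ _; exact hF t

set_option maxHeartbeats 1000000 in
/-- the bound for the connected-diagram term
`γ_xε²(p)γ_xε²(q)γ_xx(r)γ_εε(r+q-p)` (Figure 4) in Part III of the proof of Lemma 1,
for `1/3 < d_x, d_ε < 1/2`. -/
theorem figure4_diagram_bound (dx dε : ℝ)
    (hdx1 : 1 / 3 < dx) (hdx2 : dx < 1 / 2) (hdε1 : 1 / 3 < dε) (hdε2 : dε < 1 / 2) :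
    ∃ C : ℝ, 0 < C ∧ ∀ n M : ℕ, 1 ≤ M → M ≤ n →
      (n : ℝ)⁻¹ *
          ∑ p ∈ Finset.Icc (-(M : ℤ)) (M : ℤ), ((|p| : ℝ) + 1) ^ (2 * (dx + dε - 1)) *
            ∑ q ∈ Finset.Icc (-(M : ℤ)) (M : ℤ), ((|q| : ℝ) + 1) ^ (2 * (dx + dε - 1)) *
              ∑ r ∈ Finset.Icc (-(n : ℤ) + 1) ((n : ℤ) - 1),
                ((|r| : ℝ) + 1) ^ (2 * dx - 1) * ((|r + q - p| : ℝ) + 1) ^ (2 * dε - 1)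
        ≤ C * ((M : ℝ) ^ (4 * dx + 4 * dε - 1) * (n : ℝ)⁻¹ +
            (M : ℝ) ^ (4 * dx + 4 * dε - 2) * (n : ℝ) ^ (2 * dx + 2 * dε - 2)) := by
  set c : ℝ := 2 * dx + 2 * dε - 2 with hc
  have hc0 : -1 < c := by rw [hc]; linarith
  have hc1 : c < 0 := by rw [hc]; linarith
  have hp0 : (0:ℝ) < c + 1 := by linarith
  have hcp1 : c + 1 ≤ 1 := by linarith
  refine ⟨256 / (c+1)^3 + 1, by positivity, ?_⟩
  intro n M hM hMn
  have hn1 : 1 ≤ n := le_trans hM hMn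
  have hM0 : (0:ℝ) < (M:ℝ) := by exact_mod_cast hM
  have hM1 : (1:ℝ) ≤ (M:ℝ) := by exact_mod_cast hM
  have hn0 : (0:ℝ) < (n:ℝ) := by exact_mod_cast hn1
  have hn1' : (1:ℝ) ≤ (n:ℝ) := by exact_mod_cast hn1
  have habs_ge : ∀ t : ℤ, (1:ℝ) ≤ (|t|:ℝ) + 1 := by
    intro t
    have : (0:ℝ) ≤ |(t:ℝ)| := abs_nonneg _
    push_cast
    linarith
  have habs_pos : ∀ t : ℤ, ∀ e : ℝ, (0:ℝ) ≤ ((|t|:ℝ) + 1) ^ e := by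
    intro t e
    apply Real.rpow_nonneg
    linarith [habs_ge t]
  have hce : 2 * (dx + dε - 1) = c := by rw [hc]; ring
  simp only [hce]
  -- bound for the symmetric p/q sums
  have hSM : ∑ t ∈ Finset.Icc (-(M:ℤ)) (M:ℤ), ((|t|:ℝ)+1) ^ c
      ≤ 4/(c+1) * (M:ℝ)^(c+1) := by
    have h2c : (2:ℝ)^(c+1) ≤ 2 := by
      nth_rewrite 2 [← Real.rpow_one 2]
      exact Real.rpow_le_rpow_of_exponent_le one_le_two hcp1
    have hMr : (0:ℝ) < (M:ℝ)^(c+1) := Real.rpow_pos_of_pos hM0 _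
    calc ∑ t ∈ Finset.Icc (-(M:ℤ)) (M:ℤ), ((|t|:ℝ)+1) ^ c
        ≤ 2 * ∑ k ∈ Finset.range (M+1), ((k:ℝ)+1) ^ c := sym_sum hc1 M
      _ ≤ 2 * ((c+1)⁻¹ * ((M:ℝ)+1)^(c+1)) := by
          have := sum_rpow_le hc0 hc1 M; linarith
      _ ≤ 2 * ((c+1)⁻¹ * (2*(M:ℝ))^(c+1)) := by
          have h1 : ((M:ℝ)+1)^(c+1) ≤ (2*(M:ℝ))^(c+1) :=
            Real.rpow_le_rpow (by linarith) (by linarith) hp0.le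
          have h2 : (0:ℝ) ≤ (c+1)⁻¹ := by positivity
          nlinarith
      _ = 2 * (c+1)⁻¹ * ((2:ℝ)^(c+1) * (M:ℝ)^(c+1)) := by
          rw [Real.mul_rpow (by norm_num) hM0.le]; ring
      _ ≤ 2 * (c+1)⁻¹ * (2 * (M:ℝ)^(c+1)) := by
          have h2 : (0:ℝ) ≤ 2 * (c+1)⁻¹ := by positivity
          apply mul_le_mul_of_nonneg_left _ h2
          exact mul_le_mul_of_nonneg_right h2c hMr.le
      _ = 4/(c+1) * (M:ℝ)^(c+1) := by field_simp; ring
  have hSMnn : (0:ℝ) ≤ ∑ t ∈ Finset.Icc (-(M:ℤ)) (M:ℤ), ((|t|:ℝ)+1) ^ c :=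
    Finset.sum_nonneg (fun t _ => habs_pos t c)
  -- bound for the big symmetric sum of radius 3n
  have hSn : ∑ t ∈ Finset.Icc (-((3*n : ℕ):ℤ)) ((3*n : ℕ):ℤ), ((|t|:ℝ)+1) ^ c
      ≤ 8/(c+1) * (n:ℝ)^(c+1) := by
    have h4c : (4:ℝ)^(c+1) ≤ 4 := by
      nth_rewrite 2 [← Real.rpow_one 4]
      exact Real.rpow_le_rpow_of_exponent_le (by norm_num) hcp1
    have hnr : (0:ℝ) < (n:ℝ)^(c+1) := Real.rpow_pos_of_pos hn0 _
    calc ∑ t ∈ Finset.Icc (-((3*n : ℕ):ℤ)) ((3*n : ℕ):ℤ), ((|t|:ℝ)+1) ^ c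
        ≤ 2 * ∑ k ∈ Finset.range (3*n+1), ((k:ℝ)+1) ^ c := sym_sum hc1 (3*n)
      _ ≤ 2 * ((c+1)⁻¹ * (((3*n : ℕ):ℝ)+1)^(c+1)) := by
          have := sum_rpow_le hc0 hc1 (3*n); linarith
      _ ≤ 2 * ((c+1)⁻¹ * (4*(n:ℝ))^(c+1)) := by
          have h1 : (((3*n : ℕ):ℝ)+1)^(c+1) ≤ (4*(n:ℝ))^(c+1) := by
            apply Real.rpow_le_rpow (by positivity) _ hp0.le
            push_cast
            linarith
          have h2 : (0:ℝ) ≤ (c+1)⁻¹ := by positivity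
          nlinarith
      _ = 2 * (c+1)⁻¹ * ((4:ℝ)^(c+1) * (n:ℝ)^(c+1)) := by
          rw [Real.mul_rpow (by norm_num) hn0.le]; ring
      _ ≤ 2 * (c+1)⁻¹ * (4 * (n:ℝ)^(c+1)) := by
          have h2 : (0:ℝ) ≤ 2 * (c+1)⁻¹ := by positivity
          apply mul_le_mul_of_nonneg_left _ h2
          exact mul_le_mul_of_nonneg_right h4c hnr.le
      _ = 8/(c+1) * (n:ℝ)^(c+1) := by field_simp; ring
  -- bound for the inner r-sum, uniformly in p, q
  have hR : ∀ p ∈ Finset.Icc (-(M:ℤ)) (M:ℤ), ∀ q ∈ Finset.Icc (-(M:ℤ)) (M:ℤ),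
      ∑ r ∈ Finset.Icc (-(n:ℤ)+1) ((n:ℤ)-1),
          ((|r|:ℝ)+1) ^ (2*dx-1) * ((|r+q-p|:ℝ)+1) ^ (2*dε-1)
        ≤ 16/(c+1) * (n:ℝ)^(c+1) := by
    intro p hp q hq
    simp only [Finset.mem_Icc] at hp hq
    have hMn' : (M:ℤ) ≤ (n:ℤ) := by exact_mod_cast hMn
    have step1 : ∑ r ∈ Finset.Icc (-(n:ℤ)+1) ((n:ℤ)-1),
        ((|r|:ℝ)+1) ^ (2*dx-1) * ((|r+q-p|:ℝ)+1) ^ (2*dε-1)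
        ≤ (∑ r ∈ Finset.Icc (-(n:ℤ)+1) ((n:ℤ)-1), ((|r|:ℝ)+1) ^ c)
          + ∑ r ∈ Finset.Icc (-(n:ℤ)+1) ((n:ℤ)-1), ((|r+q-p|:ℝ)+1) ^ c := by
      rw [← Finset.sum_add_distrib]
      apply Finset.sum_le_sum
      intro r _
      have h := prod_rpow_le (a := 2*dx-1) (b := 2*dε-1)
        (by linarith) (by linarith) (habs_ge r) (habs_ge (r+(q-p)))
      have he : 2*dx-1 + (2*dε-1) = c := by rw [hc]; ring
      rw [he] at h
      have heq : ((r:ℝ) + (q:ℝ) - (p:ℝ)) = (((r + (q - p)) : ℤ) : ℝ) := by push_cast; ring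
      rw [heq]
      exact h
    have step2 : ∑ r ∈ Finset.Icc (-(n:ℤ)+1) ((n:ℤ)-1), ((|r|:ℝ)+1) ^ c
        ≤ ∑ t ∈ Finset.Icc (-((3*n : ℕ):ℤ)) ((3*n : ℕ):ℤ), ((|t|:ℝ)+1) ^ c := by
      apply Finset.sum_le_sum_of_subset_of_nonneg
      · intro x hx
        simp only [Finset.mem_Icc] at hx ⊢
        push_cast
        omega
      · intro t _ _; exact habs_pos t c
    have step3 : ∑ r ∈ Finset.Icc (-(n:ℤ)+1) ((n:ℤ)-1), ((|r+q-p|:ℝ)+1) ^ c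
        ≤ ∑ t ∈ Finset.Icc (-((3*n : ℕ):ℤ)) ((3*n : ℕ):ℤ), ((|t|:ℝ)+1) ^ c := by
      have hsum_eq : ∑ r ∈ Finset.Icc (-(n:ℤ)+1) ((n:ℤ)-1), ((|r+q-p|:ℝ)+1) ^ c
          = ∑ r ∈ Finset.Icc (-(n:ℤ)+1) ((n:ℤ)-1), ((|((r + (q-p) : ℤ) : ℝ)|)+1) ^ c := by
        apply Finset.sum_congr rfl
        intro r _
        have heq : ((r:ℝ) + (q:ℝ) - (p:ℝ)) = (((r + (q - p)) : ℤ) : ℝ) := by push_cast; ring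
        rw [heq]
      rw [hsum_eq]
      apply shift_sum_le (F := fun t : ℤ => ((|t|:ℝ)+1) ^ c)
        (fun t => habs_pos t c)
      intro r h1 h2
      constructor <;> push_cast <;> omega
    calc ∑ r ∈ Finset.Icc (-(n:ℤ)+1) ((n:ℤ)-1),
          ((|r|:ℝ)+1) ^ (2*dx-1) * ((|r+q-p|:ℝ)+1) ^ (2*dε-1)
        ≤ (∑ r ∈ Finset.Icc (-(n:ℤ)+1) ((n:ℤ)-1), ((|r|:ℝ)+1) ^ c)
          + ∑ r ∈ Finset.Icc (-(n:ℤ)+1) ((n:ℤ)-1), ((|r+q-p|:ℝ)+1) ^ c := step1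
      _ ≤ (8/(c+1) * (n:ℝ)^(c+1)) + (8/(c+1) * (n:ℝ)^(c+1)) := by
          have a1 := step2.trans hSn
          have a2 := step3.trans hSn
          linarith
      _ = 16/(c+1) * (n:ℝ)^(c+1) := by ring
  set SM := ∑ t ∈ Finset.Icc (-(M:ℤ)) (M:ℤ), ((|t|:ℝ)+1) ^ c with hSMdef
  set KR : ℝ := 16/(c+1) * (n:ℝ)^(c+1) with hKRdef
  have hKRnn : (0:ℝ) ≤ KR := by
    rw [hKRdef]; positivity
  have inner : ∀ p ∈ Finset.Icc (-(M:ℤ)) (M:ℤ),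
      ∑ q ∈ Finset.Icc (-(M:ℤ)) (M:ℤ), ((|q|:ℝ)+1) ^ c *
        ∑ r ∈ Finset.Icc (-(n:ℤ)+1) ((n:ℤ)-1),
          ((|r|:ℝ)+1) ^ (2*dx-1) * ((|r+q-p|:ℝ)+1) ^ (2*dε-1)
      ≤ KR * SM := by
    intro p hp
    calc ∑ q ∈ Finset.Icc (-(M:ℤ)) (M:ℤ), ((|q|:ℝ)+1) ^ c *
          ∑ r ∈ Finset.Icc (-(n:ℤ)+1) ((n:ℤ)-1),
            ((|r|:ℝ)+1) ^ (2*dx-1) * ((|r+q-p|:ℝ)+1) ^ (2*dε-1)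
        ≤ ∑ q ∈ Finset.Icc (-(M:ℤ)) (M:ℤ), ((|q|:ℝ)+1) ^ c * KR := by
          apply Finset.sum_le_sum
          intro q hq
          exact mul_le_mul_of_nonneg_left (hR p hp q hq) (habs_pos q c)
      _ = KR * SM := by rw [← Finset.sum_mul, hSMdef]; ring
  have outer : ∑ p ∈ Finset.Icc (-(M:ℤ)) (M:ℤ), ((|p|:ℝ)+1) ^ c *
      (∑ q ∈ Finset.Icc (-(M:ℤ)) (M:ℤ), ((|q|:ℝ)+1) ^ c *
        ∑ r ∈ Finset.Icc (-(n:ℤ)+1) ((n:ℤ)-1),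
          ((|r|:ℝ)+1) ^ (2*dx-1) * ((|r+q-p|:ℝ)+1) ^ (2*dε-1))
      ≤ SM * (KR * SM) := by
    calc ∑ p ∈ Finset.Icc (-(M:ℤ)) (M:ℤ), ((|p|:ℝ)+1) ^ c *
        (∑ q ∈ Finset.Icc (-(M:ℤ)) (M:ℤ), ((|q|:ℝ)+1) ^ c *
          ∑ r ∈ Finset.Icc (-(n:ℤ)+1) ((n:ℤ)-1),
            ((|r|:ℝ)+1) ^ (2*dx-1) * ((|r+q-p|:ℝ)+1) ^ (2*dε-1))
        ≤ ∑ p ∈ Finset.Icc (-(M:ℤ)) (M:ℤ), ((|p|:ℝ)+1) ^ c * (KR * SM) := by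
          apply Finset.sum_le_sum
          intro p hp
          exact mul_le_mul_of_nonneg_left (inner p hp) (habs_pos p c)
      _ = SM * (KR * SM) := by rw [← Finset.sum_mul, hSMdef]
  have hKM : (0:ℝ) ≤ 4/(c+1) * (M:ℝ)^(c+1) := by positivity
  have step : SM * (KR * SM) ≤ (4/(c+1) * (M:ℝ)^(c+1)) * (KR * (4/(c+1) * (M:ℝ)^(c+1))) := by
    calc SM * (KR * SM) ≤ SM * (KR * (4/(c+1) * (M:ℝ)^(c+1))) :=
          mul_le_mul_of_nonneg_left (mul_le_mul_of_nonneg_left hSM hKRnn) hSMnn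
      _ ≤ (4/(c+1) * (M:ℝ)^(c+1)) * (KR * (4/(c+1) * (M:ℝ)^(c+1))) :=
          mul_le_mul_of_nonneg_right hSM (mul_nonneg hKRnn hKM)
  have lhs_le : (n:ℝ)⁻¹ *
      ∑ p ∈ Finset.Icc (-(M:ℤ)) (M:ℤ), ((|p|:ℝ)+1) ^ c *
        ∑ q ∈ Finset.Icc (-(M:ℤ)) (M:ℤ), ((|q|:ℝ)+1) ^ c *
          ∑ r ∈ Finset.Icc (-(n:ℤ)+1) ((n:ℤ)-1),
            ((|r|:ℝ)+1) ^ (2*dx-1) * ((|r+q-p|:ℝ)+1) ^ (2*dε-1)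
      ≤ (n:ℝ)⁻¹ * ((4/(c+1) * (M:ℝ)^(c+1)) * (KR * (4/(c+1) * (M:ℝ)^(c+1)))) := by
    apply mul_le_mul_of_nonneg_left (outer.trans step) (by positivity)
  refine lhs_le.trans ?_
  -- final arithmetic
  have e1 : (M:ℝ)^(c+1) * (M:ℝ)^(c+1) = (M:ℝ)^(4*dx+4*dε-2) := by
    rw [← Real.rpow_add hM0]
    congr 1
    rw [hc]; ring
  have e2 : (n:ℝ)⁻¹ * (n:ℝ)^(c+1) = (n:ℝ)^(2*dx+2*dε-2) := by
    rw [← Real.rpow_neg_one (n:ℝ), ← Real.rpow_add hn0]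
    congr 1
    rw [hc]; ring
  have key : (n:ℝ)⁻¹ * ((4/(c+1) * (M:ℝ)^(c+1)) * (KR * (4/(c+1) * (M:ℝ)^(c+1))))
      = 256/(c+1)^3 * ((M:ℝ)^(4*dx+4*dε-2) * (n:ℝ)^(2*dx+2*dε-2)) := by
    rw [hKRdef, ← e1, ← e2]
    field_simp
    ring
  rw [key]
  have hT1 : (0:ℝ) ≤ (M:ℝ)^(4*dx+4*dε-1) * (n:ℝ)⁻¹ := by positivity
  have hT2 : (0:ℝ) ≤ (M:ℝ)^(4*dx+4*dε-2) * (n:ℝ)^(2*dx+2*dε-2) := by positivity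
  have hC0 : (0:ℝ) ≤ 256/(c+1)^3 := by positivity
  nlinarith [hT1, hT2, hC0]
end

section
/- Let 1/3 < d_x < 1/2 and 1/3 < d_ε < 1/2. There exists a constant C (depending only on d_x, d_ε) such that for all integers n ≥ M ≥ 1: n^{−1} Σ_{p=−M}^{M} (|p|+1)^{d_x+d_ε−1} Σ_{q=−M}^{M} (|q|+1)^{d_x+d_ε−1} Σ_{r=−n+1}^{n−1} (|r+q|+1)^{2(d_x+d_ε−1)} (|r−p|+1)^{2(d_x+d_ε−1)} ≤ C ( M^{4d_x+4d_ε−1} n^{−1} + M^{4d_x+4d_ε−2} n^{2d_x+2d_ε−2} ). -/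
open Filter Finset Real

private lemma tele_aux {c : ℝ} (hc0 : 0 < c) (hc1 : c ≤ 1) {x : ℝ} (hx : 1 ≤ x) :
    c * x ^ (c - 1) ≤ x ^ c - (x - 1) ^ c := by
  have hx0 : (0:ℝ) < x := lt_of_lt_of_le one_pos hx
  have h1x : (0:ℝ) ≤ 1 - 1/x := by
    have : 1/x ≤ 1 := by rw [div_le_one hx0]; exact hx
    linarith
  have hbern : (1 + (-(1/x))) ^ c ≤ 1 + c * (-(1/x)) := by
    refine rpow_one_add_le_one_add_mul_self ?_ hc0.le hc1
    have : 0 < 1/x := by positivity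
    linarith
  have hxm : x - 1 = x * (1 - 1/x) := by field_simp
  have h2 : (x - 1) ^ c = x ^ c * (1 - 1/x) ^ c := by
    rw [hxm, Real.mul_rpow hx0.le h1x]
  have h3 : (1 - 1/x) ^ c ≤ 1 - c/x := by
    have he : (1:ℝ) + (-(1/x)) = 1 - 1/x := by ring
    rw [he] at hbern
    calc (1 - 1/x) ^ c ≤ 1 + c * (-(1/x)) := hbern
    _ = 1 - c/x := by ring
  have hxc : (0:ℝ) ≤ x ^ c := Real.rpow_nonneg hx0.le c
  have h5 : x ^ c * (1 - 1/x) ^ c ≤ x ^ c * (1 - c/x) :=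
    mul_le_mul_of_nonneg_left h3 hxc
  have h6 : x ^ c * (1 - c/x) = x ^ c - c * x ^ (c-1) := by
    have hxx : x ^ (c-1) = x ^ c / x := by
      rw [Real.rpow_sub hx0, Real.rpow_one]
    rw [hxx]; field_simp
  linarith [h2.le, h2.ge]

private lemma sum_w_le {b : ℝ} (hb0 : -1 < b) (hb1 : b < 0) (N : ℕ) :
    ∑ s ∈ Finset.Icc (-(N:ℤ)) (N:ℤ), ((|s| : ℝ) + 1) ^ b ≤ 3/(b+1) * ((N:ℝ)+1)^(b+1) := by
  have hc0 : 0 < b + 1 := by linarith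
  have hc1 : b + 1 ≤ 1 := by linarith
  induction N with
  | zero =>
    simp only [Nat.cast_zero, neg_zero, Finset.Icc_self, Finset.sum_singleton]
    have h1 : ((|((0:ℤ):ℝ)|) + 1) ^ b = 1 := by norm_num
    have h2 : ((0:ℝ)+1)^(b+1) = 1 := by norm_num
    rw [h1, h2, mul_one, le_div_iff₀ hc0]
    linarith
  | succ N ih =>
    have hdecomp : Finset.Icc (-((N+1:ℕ)):ℤ) ((N+1:ℕ):ℤ)
        = insert (-((N+1:ℕ):ℤ)) (insert ((N+1:ℕ):ℤ) (Finset.Icc (-(N:ℕ):ℤ) ((N:ℕ):ℤ))) := by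
      ext s
      simp only [Finset.mem_Icc, Finset.mem_insert]
      push_cast
      omega
    have hnotmem1 : ((N+1:ℕ):ℤ) ∉ Finset.Icc (-(N:ℕ):ℤ) ((N:ℕ):ℤ) := by
      simp only [Finset.mem_Icc]; push_cast; omega
    have hnotmem2 : (-((N+1:ℕ):ℤ)) ∉ insert ((N+1:ℕ):ℤ) (Finset.Icc (-(N:ℕ):ℤ) ((N:ℕ):ℤ)) := by
      simp only [Finset.mem_Icc, Finset.mem_insert]; push_cast; omega
    rw [hdecomp, Finset.sum_insert hnotmem2, Finset.sum_insert hnotmem1]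
    have e1 : ((((-((N+1:ℕ):ℤ)) : ℤ) : ℝ)) = -((N:ℝ)+1) := by push_cast; ring
    have e2 : ((((N+1:ℕ):ℤ) : ℝ)) = (N:ℝ)+1 := by push_cast; ring
    rw [e1, e2, abs_neg, abs_of_nonneg (by positivity : (0:ℝ) ≤ (N:ℝ)+1)]
    have htele := tele_aux hc0 hc1 (x := (N:ℝ)+2) (by linarith [Nat.cast_nonneg (α := ℝ) N])
    rw [show (N:ℝ) + 2 - 1 = (N:ℝ) + 1 by ring, show b + 1 - 1 = b by ring] at htele
    have hpow : (0:ℝ) < ((N:ℝ)+2)^b := Real.rpow_pos_of_pos (by positivity) b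
    have hmul : ((N:ℝ)+2)^b + ((N:ℝ)+2)^b ≤ 3/(b+1) * (((N:ℝ)+2)^(b+1) - ((N:ℝ)+1)^(b+1)) := by
      rw [div_mul_eq_mul_div, le_div_iff₀ hc0]
      nlinarith [htele, hpow]
    have hcast : ((N+1:ℕ):ℝ) + 1 = (N:ℝ) + 2 := by push_cast; ring
    rw [hcast]
    have hfin : (N:ℝ) + 1 + 1 = (N:ℝ) + 2 := by ring
    rw [hfin]
    linarith [ih]



private lemma sum_shift_le {b : ℝ} (hb0 : -1 < b) (hb1 : b < 0) (c A B : ℤ) (N : ℕ)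
    (h1 : -(N:ℤ) ≤ A + c) (h2 : B + c ≤ (N:ℤ)) :
    ∑ r ∈ Finset.Icc A B, ((|(r : ℝ) + (c : ℝ)| : ℝ) + 1) ^ b ≤ 3/(b+1) * ((N:ℝ)+1)^(b+1) := by
  have heq : ∑ r ∈ Finset.Icc A B, ((|(r : ℝ) + (c : ℝ)|) + 1) ^ b
      = ∑ s ∈ Finset.Icc (A+c) (B+c), ((|(s:ℝ)|) + 1) ^ b := by
    rw [← Finset.map_add_right_Icc, Finset.sum_map]
    apply Finset.sum_congr rfl
    intro x _
    simp [addRightEmbedding]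
  rw [heq]
  refine le_trans (Finset.sum_le_sum_of_subset_of_nonneg (Finset.Icc_subset_Icc h1 h2) ?_)
    (sum_w_le hb0 hb1 N)
  intro i _ _
  positivity

private lemma split_r {a : ℝ} (ha : a < 0) (p q r : ℤ) :
    ((|(r:ℝ) + q| : ℝ) + 1) ^ (2*a) * ((|(r:ℝ) - p| : ℝ) + 1) ^ (2*a)
      ≤ (2:ℝ)^(-(2*a)) * ((|(p:ℝ) + q| : ℝ) + 1) ^ (2*a) *
        (((|(r:ℝ) + q| : ℝ) + 1) ^ (2*a) + ((|(r:ℝ) - p| : ℝ) + 1) ^ (2*a)) := by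
  set u : ℝ := |(r:ℝ) + q| + 1 with hu
  set v : ℝ := |(r:ℝ) - p| + 1 with hv
  set t : ℝ := |(p:ℝ) + q| + 1 with ht
  have hu0 : 0 < u := by positivity
  have hv0 : 0 < v := by positivity
  have ht0 : 0 < t := by positivity
  have htri : t ≤ u + v := by
    have : |(p:ℝ) + q| ≤ |(r:ℝ) + q| + |(r:ℝ) - p| := by
      have : (p:ℝ) + q = ((r:ℝ) + q) - ((r:ℝ) - p) := by ring
      rw [this]
      exact abs_sub _ _
    simp only [hu, hv, ht]; linarith
  have h2pos : (0:ℝ) < (2:ℝ)^(-(2*a)) := Real.rpow_pos_of_pos two_pos _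
  have key : ∀ x : ℝ, 0 < x → t/2 ≤ x → x ^ (2*a) ≤ (2:ℝ)^(-(2*a)) * t ^ (2*a) := by
    intro x hx hxt
    have : x ^ (2*a) ≤ (t/2) ^ (2*a) :=
      Real.rpow_le_rpow_of_nonpos (by positivity) hxt (by linarith)
    calc x ^ (2*a) ≤ (t/2) ^ (2*a) := this
    _ = t ^ (2*a) / (2:ℝ) ^ (2*a) := Real.div_rpow ht0.le two_pos.le _
    _ = (2:ℝ)^(-(2*a)) * t ^ (2*a) := by
        rw [Real.rpow_neg two_pos.le]; field_simp
  have hun : (0:ℝ) ≤ u ^ (2*a) := Real.rpow_nonneg hu0.le _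
  have hvn : (0:ℝ) ≤ v ^ (2*a) := Real.rpow_nonneg hv0.le _
  have htn : (0:ℝ) ≤ t ^ (2*a) := Real.rpow_nonneg ht0.le _
  rcases le_total u v with h | h
  · have hb : v ^ (2*a) ≤ (2:ℝ)^(-(2*a)) * t ^ (2*a) := key v hv0 (by linarith)
    nlinarith [mul_le_mul_of_nonneg_left hb hun]
  · have hb : u ^ (2*a) ≤ (2:ℝ)^(-(2*a)) * t ^ (2*a) := key u hu0 (by linarith)
    nlinarith [mul_le_mul_of_nonneg_right hb hvn]

private lemma split_q {a : ℝ} (ha : a < 0) (p q : ℤ) :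
    ((|(q:ℝ)| : ℝ) + 1) ^ a * ((|(p:ℝ) + q| : ℝ) + 1) ^ (2*a)
      ≤ ((|(q:ℝ)| : ℝ) + 1) ^ (3*a) + ((|(p:ℝ) + q| : ℝ) + 1) ^ (3*a) := by
  set u : ℝ := |(q:ℝ)| + 1 with hu
  set t : ℝ := |(p:ℝ) + q| + 1 with ht
  have hu0 : 0 < u := by positivity
  have ht0 : 0 < t := by positivity
  have hun : (0:ℝ) ≤ u ^ (3*a) := Real.rpow_nonneg hu0.le _
  have htn : (0:ℝ) ≤ t ^ (3*a) := Real.rpow_nonneg ht0.le _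
  rcases le_total u t with h | h
  · have hb : t ^ (2*a) ≤ u ^ (2*a) :=
      Real.rpow_le_rpow_of_nonpos hu0 h (by linarith)
    have : u ^ a * t ^ (2*a) ≤ u ^ a * u ^ (2*a) :=
      mul_le_mul_of_nonneg_left hb (Real.rpow_nonneg hu0.le a)
    have heq : u ^ a * u ^ (2*a) = u ^ (3*a) := by
      rw [← Real.rpow_add hu0]; ring_nf
    linarith
  · have hb : u ^ a ≤ t ^ a :=
      Real.rpow_le_rpow_of_nonpos ht0 h (by linarith)
    have : u ^ a * t ^ (2*a) ≤ t ^ a * t ^ (2*a) :=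
      mul_le_mul_of_nonneg_right hb (Real.rpow_nonneg ht0.le _)
    have heq : t ^ a * t ^ (2*a) = t ^ (3*a) := by
      rw [← Real.rpow_add ht0]; ring_nf
    linarith

private lemma rpow_le_three_mul {y x e : ℝ} (hx : 0 ≤ x) (hy : 0 ≤ y) (hyx : y ≤ 3*x)
    (he0 : 0 ≤ e) (he1 : e ≤ 1) : y ^ e ≤ 3 * x ^ e := by
  calc y ^ e ≤ (3*x) ^ e := Real.rpow_le_rpow hy hyx he0
  _ = 3 ^ e * x ^ e := Real.mul_rpow (by norm_num) hx
  _ ≤ 3 * x ^ e := by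
      have h3 : (3:ℝ) ^ e ≤ 3 ^ (1:ℝ) :=
        Real.rpow_le_rpow_of_exponent_le (by norm_num) he1
      rw [Real.rpow_one] at h3
      exact mul_le_mul_of_nonneg_right h3 (Real.rpow_nonneg hx e)



private lemma main_aux {a : ℝ} (ha1 : -(1/3:ℝ) < a) (ha2 : a < 0) :
    ∃ C : ℝ, 0 < C ∧ ∀ n M : ℕ, 1 ≤ M → M ≤ n →
      (n : ℝ)⁻¹ *
          ∑ p ∈ Finset.Icc (-(M : ℤ)) (M : ℤ), ((|p| : ℝ) + 1) ^ a *
            ∑ q ∈ Finset.Icc (-(M : ℤ)) (M : ℤ), ((|q| : ℝ) + 1) ^ a *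
              ∑ r ∈ Finset.Icc (-(n : ℤ) + 1) ((n : ℤ) - 1),
                ((|r + q| : ℝ) + 1) ^ (2 * a) * ((|r - p| : ℝ) + 1) ^ (2 * a)
        ≤ C * ((M : ℝ) ^ (4*a+3) * (n : ℝ)⁻¹ + (M : ℝ) ^ (4*a+2) * (n : ℝ) ^ (2*a)) := by
  have hA : 0 < a + 1 := by linarith
  have hB0 : (-1:ℝ) < 2*a := by linarith
  have hB : 0 < 2*a + 1 := by linarith
  have hC0 : (-1:ℝ) < 3*a := by linarith
  have hCp : 0 < 3*a + 1 := by linarith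
  have h2a : 2*a < 0 := by linarith
  have h3a : 3*a < 0 := by linarith
  have hA0 : (-1:ℝ) < a := by linarith
  set K1 : ℝ := (2:ℝ)^(-(2*a)) * (6*(3/(2*a+1))) with hK1
  set K2 : ℝ := K1 * (6*(3/(3*a+1))) with hK2
  set K3 : ℝ := K2 * (3*(3/(a+1))) with hK3
  have hP2 : (0:ℝ) < (2:ℝ)^(-(2*a)) := Real.rpow_pos_of_pos two_pos _
  have hK1p : 0 < K1 := by
    rw [hK1]; apply mul_pos hP2; positivity
  have hK2p : 0 < K2 := by
    rw [hK2]; apply mul_pos hK1p; positivity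
  have hK3p : 0 < K3 := by
    rw [hK3]; apply mul_pos hK2p; positivity
  refine ⟨K3, hK3p, ?_⟩
  intro n M hM hMn
  have hM1 : (1:ℝ) ≤ (M:ℝ) := by exact_mod_cast hM
  have hMR : (M:ℝ) ≤ (n:ℝ) := by exact_mod_cast hMn
  have hn1 : (1:ℝ) ≤ (n:ℝ) := le_trans hM1 hMR
  have hn0 : (0:ℝ) < (n:ℝ) := lt_of_lt_of_le one_pos hn1
  have hM0 : (0:ℝ) < (M:ℝ) := lt_of_lt_of_le one_pos hM1
  have hMZ : (M:ℤ) ≤ (n:ℤ) := by exact_mod_cast hMn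
  -- Step R
  have hR : ∀ p ∈ Finset.Icc (-(M : ℤ)) (M : ℤ), ∀ q ∈ Finset.Icc (-(M : ℤ)) (M : ℤ),
      ∑ r ∈ Finset.Icc (-(n : ℤ) + 1) ((n : ℤ) - 1),
          ((|r + q| : ℝ) + 1) ^ (2 * a) * ((|r - p| : ℝ) + 1) ^ (2 * a)
        ≤ K1 * (((|(p:ℝ) + q| : ℝ) + 1) ^ (2*a) * (n:ℝ)^(2*a+1)) := by
    intro p hp q hq
    rw [Finset.mem_Icc] at hp hq
    have s1 : ∑ r ∈ Finset.Icc (-(n : ℤ) + 1) ((n : ℤ) - 1),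
          ((|r + q| : ℝ) + 1) ^ (2 * a) * ((|r - p| : ℝ) + 1) ^ (2 * a)
        ≤ ∑ r ∈ Finset.Icc (-(n : ℤ) + 1) ((n : ℤ) - 1),
            (2:ℝ)^(-(2*a)) * ((|(p:ℝ) + q| : ℝ) + 1) ^ (2*a) *
              (((|(r:ℝ) + q| : ℝ) + 1) ^ (2*a) + ((|(r:ℝ) - p| : ℝ) + 1) ^ (2*a)) :=
      Finset.sum_le_sum fun r _ => split_r ha2 p q r
    rw [← Finset.mul_sum, Finset.sum_add_distrib] at s1
    have hu : ∑ r ∈ Finset.Icc (-(n : ℤ) + 1) ((n : ℤ) - 1), ((|(r:ℝ) + q| : ℝ) + 1) ^ (2*a)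
        ≤ 3/(2*a+1) * (((2*n : ℕ):ℝ)+1)^(2*a+1) :=
      sum_shift_le hB0 h2a q _ _ (2*n) (by push_cast; omega) (by push_cast; omega)
    have hveq : ∑ r ∈ Finset.Icc (-(n : ℤ) + 1) ((n : ℤ) - 1), ((|(r:ℝ) - p| : ℝ) + 1) ^ (2*a)
        = ∑ r ∈ Finset.Icc (-(n : ℤ) + 1) ((n : ℤ) - 1), ((|(r:ℝ) + ((-p : ℤ):ℝ)| : ℝ) + 1) ^ (2*a) := by
      apply Finset.sum_congr rfl
      intro r _
      congr 2
      push_cast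
      ring_nf
    have hv : ∑ r ∈ Finset.Icc (-(n : ℤ) + 1) ((n : ℤ) - 1), ((|(r:ℝ) - p| : ℝ) + 1) ^ (2*a)
        ≤ 3/(2*a+1) * (((2*n : ℕ):ℝ)+1)^(2*a+1) := by
      rw [hveq]
      exact sum_shift_le hB0 h2a (-p) _ _ (2*n) (by push_cast; omega) (by push_cast; omega)
    have hX : (((2*n : ℕ):ℝ)+1)^(2*a+1) ≤ 3 * (n:ℝ)^(2*a+1) := by
      apply rpow_le_three_mul hn0.le (by positivity) _ hB.le (by linarith)
      push_cast
      linarith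
    have hconst : (0:ℝ) ≤ (2:ℝ)^(-(2*a)) * ((|(p:ℝ) + q| : ℝ) + 1) ^ (2*a) := by positivity
    have hs2 : 0 ≤ 3/(2*a+1) := by positivity
    calc ∑ r ∈ Finset.Icc (-(n : ℤ) + 1) ((n : ℤ) - 1),
          ((|r + q| : ℝ) + 1) ^ (2 * a) * ((|r - p| : ℝ) + 1) ^ (2 * a)
        ≤ (2:ℝ)^(-(2*a)) * ((|(p:ℝ) + q| : ℝ) + 1) ^ (2*a) *
            ((∑ r ∈ Finset.Icc (-(n : ℤ) + 1) ((n : ℤ) - 1), ((|(r:ℝ) + q| : ℝ) + 1) ^ (2*a)) +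
             ∑ r ∈ Finset.Icc (-(n : ℤ) + 1) ((n : ℤ) - 1), ((|(r:ℝ) - p| : ℝ) + 1) ^ (2*a)) := s1
      _ ≤ (2:ℝ)^(-(2*a)) * ((|(p:ℝ) + q| : ℝ) + 1) ^ (2*a) *
            (3/(2*a+1) * (3 * (n:ℝ)^(2*a+1)) + 3/(2*a+1) * (3 * (n:ℝ)^(2*a+1))) := by
          apply mul_le_mul_of_nonneg_left _ hconst
          have b1 := le_trans hu (mul_le_mul_of_nonneg_left hX hs2)
          have b2 := le_trans hv (mul_le_mul_of_nonneg_left hX hs2)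
          linarith
      _ = K1 * (((|(p:ℝ) + q| : ℝ) + 1) ^ (2*a) * (n:ℝ)^(2*a+1)) := by
          rw [hK1]; ring
  -- Step Q
  have hQ : ∀ p ∈ Finset.Icc (-(M : ℤ)) (M : ℤ),
      ∑ q ∈ Finset.Icc (-(M : ℤ)) (M : ℤ), ((|q| : ℝ) + 1) ^ a *
          ∑ r ∈ Finset.Icc (-(n : ℤ) + 1) ((n : ℤ) - 1),
            ((|r + q| : ℝ) + 1) ^ (2 * a) * ((|r - p| : ℝ) + 1) ^ (2 * a)
        ≤ K2 * ((M:ℝ)^(3*a+1) * (n:ℝ)^(2*a+1)) := by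
    intro p hp
    have hpIcc := hp
    rw [Finset.mem_Icc] at hp
    have s1 : ∑ q ∈ Finset.Icc (-(M : ℤ)) (M : ℤ), ((|q| : ℝ) + 1) ^ a *
          ∑ r ∈ Finset.Icc (-(n : ℤ) + 1) ((n : ℤ) - 1),
            ((|r + q| : ℝ) + 1) ^ (2 * a) * ((|r - p| : ℝ) + 1) ^ (2 * a)
        ≤ ∑ q ∈ Finset.Icc (-(M : ℤ)) (M : ℤ), ((|q| : ℝ) + 1) ^ a *
            (K1 * (((|(p:ℝ) + q| : ℝ) + 1) ^ (2*a) * (n:ℝ)^(2*a+1))) := by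
      apply Finset.sum_le_sum
      intro q hq
      exact mul_le_mul_of_nonneg_left (hR p hpIcc q hq) (by positivity)
    have s2 : ∑ q ∈ Finset.Icc (-(M : ℤ)) (M : ℤ), ((|q| : ℝ) + 1) ^ a *
            (K1 * (((|(p:ℝ) + q| : ℝ) + 1) ^ (2*a) * (n:ℝ)^(2*a+1)))
        = (K1 * (n:ℝ)^(2*a+1)) * ∑ q ∈ Finset.Icc (-(M : ℤ)) (M : ℤ),
            ((|q| : ℝ) + 1) ^ a * ((|(p:ℝ) + q| : ℝ) + 1) ^ (2*a) := by
      rw [Finset.mul_sum]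
      apply Finset.sum_congr rfl
      intro q _
      ring
    have s3 : ∑ q ∈ Finset.Icc (-(M : ℤ)) (M : ℤ),
          ((|q| : ℝ) + 1) ^ a * ((|(p:ℝ) + q| : ℝ) + 1) ^ (2*a)
        ≤ ∑ q ∈ Finset.Icc (-(M : ℤ)) (M : ℤ),
            (((|q| : ℝ) + 1) ^ (3*a) + ((|(p:ℝ) + q| : ℝ) + 1) ^ (3*a)) :=
      Finset.sum_le_sum fun q _ => split_q ha2 p q
    rw [Finset.sum_add_distrib] at s3
    have t1 : ∑ q ∈ Finset.Icc (-(M : ℤ)) (M : ℤ), ((|q| : ℝ) + 1) ^ (3*a)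
        ≤ 3/(3*a+1) * (((M:ℕ):ℝ)+1)^(3*a+1) := sum_w_le hC0 h3a M
    have t2eq : ∑ q ∈ Finset.Icc (-(M : ℤ)) (M : ℤ), ((|(p:ℝ) + q| : ℝ) + 1) ^ (3*a)
        = ∑ q ∈ Finset.Icc (-(M : ℤ)) (M : ℤ), ((|(q:ℝ) + (p:ℝ)| : ℝ) + 1) ^ (3*a) := by
      apply Finset.sum_congr rfl
      intro q _
      rw [add_comm ((p:ℝ)) ((q:ℝ))]
    have t2 : ∑ q ∈ Finset.Icc (-(M : ℤ)) (M : ℤ), ((|(p:ℝ) + q| : ℝ) + 1) ^ (3*a)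
        ≤ 3/(3*a+1) * (((2*M : ℕ):ℝ)+1)^(3*a+1) := by
      rw [t2eq]
      exact sum_shift_le hC0 h3a p _ _ (2*M) (by push_cast; omega) (by push_cast; omega)
    have hY1 : (((M:ℕ):ℝ)+1)^(3*a+1) ≤ 3 * (M:ℝ)^(3*a+1) :=
      rpow_le_three_mul hM0.le (by positivity) (by linarith) hCp.le (by linarith)
    have hY2 : (((2*M : ℕ):ℝ)+1)^(3*a+1) ≤ 3 * (M:ℝ)^(3*a+1) := by
      apply rpow_le_three_mul hM0.le (by positivity) _ hCp.le (by linarith)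
      push_cast
      linarith
    have hs3 : (0:ℝ) ≤ 3/(3*a+1) := by positivity
    have hKn : (0:ℝ) ≤ K1 * (n:ℝ)^(2*a+1) := by positivity
    calc ∑ q ∈ Finset.Icc (-(M : ℤ)) (M : ℤ), ((|q| : ℝ) + 1) ^ a *
          ∑ r ∈ Finset.Icc (-(n : ℤ) + 1) ((n : ℤ) - 1),
            ((|r + q| : ℝ) + 1) ^ (2 * a) * ((|r - p| : ℝ) + 1) ^ (2 * a)
        ≤ (K1 * (n:ℝ)^(2*a+1)) * ∑ q ∈ Finset.Icc (-(M : ℤ)) (M : ℤ),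
            ((|q| : ℝ) + 1) ^ a * ((|(p:ℝ) + q| : ℝ) + 1) ^ (2*a) := by
          rw [← s2]; exact s1
      _ ≤ (K1 * (n:ℝ)^(2*a+1)) * (3/(3*a+1) * (3 * (M:ℝ)^(3*a+1)) + 3/(3*a+1) * (3 * (M:ℝ)^(3*a+1))) := by
          apply mul_le_mul_of_nonneg_left _ hKn
          have b1 := le_trans t1 (mul_le_mul_of_nonneg_left hY1 hs3)
          have b2 := le_trans t2 (mul_le_mul_of_nonneg_left hY2 hs3)
          linarith
      _ = K2 * ((M:ℝ)^(3*a+1) * (n:ℝ)^(2*a+1)) := by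
          rw [hK2]; ring
  -- Step P
  have hP : ∑ p ∈ Finset.Icc (-(M : ℤ)) (M : ℤ), ((|p| : ℝ) + 1) ^ a *
        ∑ q ∈ Finset.Icc (-(M : ℤ)) (M : ℤ), ((|q| : ℝ) + 1) ^ a *
          ∑ r ∈ Finset.Icc (-(n : ℤ) + 1) ((n : ℤ) - 1),
            ((|r + q| : ℝ) + 1) ^ (2 * a) * ((|r - p| : ℝ) + 1) ^ (2 * a)
      ≤ K3 * ((M:ℝ)^(4*a+2) * (n:ℝ)^(2*a+1)) := by
    have s1 : ∑ p ∈ Finset.Icc (-(M : ℤ)) (M : ℤ), ((|p| : ℝ) + 1) ^ a *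
          ∑ q ∈ Finset.Icc (-(M : ℤ)) (M : ℤ), ((|q| : ℝ) + 1) ^ a *
            ∑ r ∈ Finset.Icc (-(n : ℤ) + 1) ((n : ℤ) - 1),
              ((|r + q| : ℝ) + 1) ^ (2 * a) * ((|r - p| : ℝ) + 1) ^ (2 * a)
        ≤ ∑ p ∈ Finset.Icc (-(M : ℤ)) (M : ℤ), ((|p| : ℝ) + 1) ^ a *
            (K2 * ((M:ℝ)^(3*a+1) * (n:ℝ)^(2*a+1))) := by
      apply Finset.sum_le_sum
      intro p hp
      exact mul_le_mul_of_nonneg_left (hQ p hp) (by positivity)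
    have s2 : ∑ p ∈ Finset.Icc (-(M : ℤ)) (M : ℤ), ((|p| : ℝ) + 1) ^ a *
            (K2 * ((M:ℝ)^(3*a+1) * (n:ℝ)^(2*a+1)))
        = (K2 * ((M:ℝ)^(3*a+1) * (n:ℝ)^(2*a+1))) *
            ∑ p ∈ Finset.Icc (-(M : ℤ)) (M : ℤ), ((|p| : ℝ) + 1) ^ a := by
      rw [Finset.mul_sum]
      apply Finset.sum_congr rfl
      intro p _
      ring
    have t1 : ∑ p ∈ Finset.Icc (-(M : ℤ)) (M : ℤ), ((|p| : ℝ) + 1) ^ a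
        ≤ 3/(a+1) * (((M:ℕ):ℝ)+1)^(a+1) := sum_w_le hA0 ha2 M
    have hY1 : (((M:ℕ):ℝ)+1)^(a+1) ≤ 3 * (M:ℝ)^(a+1) :=
      rpow_le_three_mul hM0.le (by positivity) (by linarith) hA.le (by linarith)
    have hs1 : (0:ℝ) ≤ 3/(a+1) := by positivity
    have hKn : (0:ℝ) ≤ K2 * ((M:ℝ)^(3*a+1) * (n:ℝ)^(2*a+1)) := by positivity
    have hMM : (M:ℝ)^(3*a+1) * (M:ℝ)^(a+1) = (M:ℝ)^(4*a+2) := by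
      rw [← Real.rpow_add hM0]
      ring_nf
    calc ∑ p ∈ Finset.Icc (-(M : ℤ)) (M : ℤ), ((|p| : ℝ) + 1) ^ a *
          ∑ q ∈ Finset.Icc (-(M : ℤ)) (M : ℤ), ((|q| : ℝ) + 1) ^ a *
            ∑ r ∈ Finset.Icc (-(n : ℤ) + 1) ((n : ℤ) - 1),
              ((|r + q| : ℝ) + 1) ^ (2 * a) * ((|r - p| : ℝ) + 1) ^ (2 * a)
        ≤ (K2 * ((M:ℝ)^(3*a+1) * (n:ℝ)^(2*a+1))) *
            ∑ p ∈ Finset.Icc (-(M : ℤ)) (M : ℤ), ((|p| : ℝ) + 1) ^ a := by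
          rw [← s2]; exact s1
      _ ≤ (K2 * ((M:ℝ)^(3*a+1) * (n:ℝ)^(2*a+1))) * (3/(a+1) * (3 * (M:ℝ)^(a+1))) := by
          apply mul_le_mul_of_nonneg_left _ hKn
          exact le_trans t1 (mul_le_mul_of_nonneg_left hY1 hs1)
      _ = K3 * (((M:ℝ)^(3*a+1) * (M:ℝ)^(a+1)) * (n:ℝ)^(2*a+1)) := by
          rw [hK3]; ring
      _ = K3 * ((M:ℝ)^(4*a+2) * (n:ℝ)^(2*a+1)) := by rw [hMM]
  -- Final
  have final1 : (n : ℝ)⁻¹ *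
        ∑ p ∈ Finset.Icc (-(M : ℤ)) (M : ℤ), ((|p| : ℝ) + 1) ^ a *
          ∑ q ∈ Finset.Icc (-(M : ℤ)) (M : ℤ), ((|q| : ℝ) + 1) ^ a *
            ∑ r ∈ Finset.Icc (-(n : ℤ) + 1) ((n : ℤ) - 1),
              ((|r + q| : ℝ) + 1) ^ (2 * a) * ((|r - p| : ℝ) + 1) ^ (2 * a)
      ≤ (n : ℝ)⁻¹ * (K3 * ((M:ℝ)^(4*a+2) * (n:ℝ)^(2*a+1))) :=
    mul_le_mul_of_nonneg_left hP (by positivity)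
  have hnn : (n:ℝ)^(2*a+1) = (n:ℝ)^(2*a) * (n:ℝ) := by
    rw [Real.rpow_add hn0, Real.rpow_one]
  have final2 : (n : ℝ)⁻¹ * (K3 * ((M:ℝ)^(4*a+2) * (n:ℝ)^(2*a+1)))
      = K3 * ((M:ℝ)^(4*a+2) * (n:ℝ)^(2*a)) := by
    rw [hnn]
    field_simp
  have final3 : K3 * ((M:ℝ)^(4*a+2) * (n:ℝ)^(2*a))
      ≤ K3 * ((M:ℝ)^(4*a+3) * (n:ℝ)⁻¹ + (M:ℝ)^(4*a+2) * (n:ℝ)^(2*a)) := by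
    apply mul_le_mul_of_nonneg_left _ hK3p.le
    have : (0:ℝ) ≤ (M:ℝ)^(4*a+3) * (n:ℝ)⁻¹ := by positivity
    linarith
  calc (n : ℝ)⁻¹ *
        ∑ p ∈ Finset.Icc (-(M : ℤ)) (M : ℤ), ((|p| : ℝ) + 1) ^ a *
          ∑ q ∈ Finset.Icc (-(M : ℤ)) (M : ℤ), ((|q| : ℝ) + 1) ^ a *
            ∑ r ∈ Finset.Icc (-(n : ℤ) + 1) ((n : ℤ) - 1),
              ((|r + q| : ℝ) + 1) ^ (2 * a) * ((|r - p| : ℝ) + 1) ^ (2 * a)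
      ≤ (n : ℝ)⁻¹ * (K3 * ((M:ℝ)^(4*a+2) * (n:ℝ)^(2*a+1))) := final1
    _ = K3 * ((M:ℝ)^(4*a+2) * (n:ℝ)^(2*a)) := final2
    _ ≤ K3 * ((M:ℝ)^(4*a+3) * (n:ℝ)⁻¹ + (M:ℝ)^(4*a+2) * (n:ℝ)^(2*a)) := final3


/-- the bound for the connected-diagram term
`γ_xε(p)γ_xε(q)γ_xε²(r+q)γ_εx²(r-p)` (Figure 6) in Part III of the proof of Lemma 1,
for `1/3 < d_x, d_ε < 1/2`. -/
theorem figure6_diagram_bound (dx dε : ℝ)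
    (hdx1 : 1 / 3 < dx) (hdx2 : dx < 1 / 2) (hdε1 : 1 / 3 < dε) (hdε2 : dε < 1 / 2) :
    ∃ C : ℝ, 0 < C ∧ ∀ n M : ℕ, 1 ≤ M → M ≤ n →
      (n : ℝ)⁻¹ *
          ∑ p ∈ Finset.Icc (-(M : ℤ)) (M : ℤ), ((|p| : ℝ) + 1) ^ (dx + dε - 1) *
            ∑ q ∈ Finset.Icc (-(M : ℤ)) (M : ℤ), ((|q| : ℝ) + 1) ^ (dx + dε - 1) *
              ∑ r ∈ Finset.Icc (-(n : ℤ) + 1) ((n : ℤ) - 1),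
                ((|r + q| : ℝ) + 1) ^ (2 * (dx + dε - 1)) *
                  ((|r - p| : ℝ) + 1) ^ (2 * (dx + dε - 1))
        ≤ C * ((M : ℝ) ^ (4 * dx + 4 * dε - 1) * (n : ℝ)⁻¹ +
            (M : ℝ) ^ (4 * dx + 4 * dε - 2) * (n : ℝ) ^ (2 * dx + 2 * dε - 2)) := by
  have ha1 : -(1/3:ℝ) < dx + dε - 1 := by linarith
  have ha2 : dx + dε - 1 < 0 := by linarith
  obtain ⟨C, hC, h⟩ := main_aux ha1 ha2
  refine ⟨C, hC, ?_⟩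
  intro n M hM hMn
  have := h n M hM hMn
  rw [show 4 * dx + 4 * dε - 1 = 4*(dx + dε - 1)+3 by ring,
      show 4 * dx + 4 * dε - 2 = 4*(dx + dε - 1)+2 by ring,
      show 2 * dx + 2 * dε - 2 = 2*(dx + dε - 1) by ring]
  exact this
end

section
/- Let 1/3 < d_x < 1/2 and 1/3 < d_ε < 1/2. There exists a constant C (depending only on d_x, d_ε) such that for all integers n ≥ M ≥ 1: n^{−1} Σ_{p=−M}^{M} Σ_{q=−M}^{M} Σ_{r=−n+1}^{n−1} (|r|+1)^{2d_x−1} (|r+p−q|+1)^{2d_ε−1} (|r−p|+1)^{2(d_x+d_ε−1)} (|r+q|+1)^{2(d_x+d_ε−1)} ≤ C ( M^{4d_x+4d_ε−1} n^{−1} + M^{4d_x+4d_ε−2} n^{2d_x+2d_ε−2} ). -/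
open Finset

noncomputable def pf (e : ℝ) (t : ℤ) : ℝ := ((|t| : ℝ) + 1) ^ e

lemma pf_base_pos (t : ℤ) : (0:ℝ) < (|t| : ℝ) + 1 := by
  have : (0:ℝ) ≤ (|t| : ℝ) := by exact_mod_cast abs_nonneg t
  linarith

lemma pf_pos (e : ℝ) (t : ℤ) : 0 < pf e t := Real.rpow_pos_of_pos (pf_base_pos t) e

lemma pf_nonneg (e : ℝ) (t : ℤ) : 0 ≤ pf e t := (pf_pos e t).le

lemma pf_neg (e : ℝ) (t : ℤ) : pf e (-t) = pf e t := by simp [pf]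

lemma pf_mul (e₁ e₂ : ℝ) (t : ℤ) : pf e₁ t * pf e₂ t = pf (e₁ + e₂) t :=
  (Real.rpow_add (pf_base_pos t) e₁ e₂).symm

lemma pf_mono {e : ℝ} (he : e ≤ 0) {u v : ℤ} (h : |u| ≤ |v|) : pf e v ≤ pf e u := by
  apply Real.rpow_le_rpow_of_nonpos (pf_base_pos u) _ he
  have : (|u|:ℝ) ≤ (|v|:ℝ) := by exact_mod_cast h
  linarith

lemma pf_prod_le {e₁ e₂ : ℝ} (he₁ : e₁ ≤ 0) (he₂ : e₂ ≤ 0) (u v : ℤ) :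
    pf e₁ u * pf e₂ v ≤ pf (e₁+e₂) u + pf (e₁+e₂) v := by
  rcases le_total |u| |v| with h | h
  · have h2 : pf e₂ v ≤ pf e₂ u := pf_mono he₂ h
    have h3 : pf e₁ u * pf e₂ v ≤ pf e₁ u * pf e₂ u :=
      mul_le_mul_of_nonneg_left h2 (pf_nonneg e₁ u)
    rw [pf_mul] at h3
    have := pf_nonneg (e₁+e₂) v
    linarith
  · have h2 : pf e₁ u ≤ pf e₁ v := pf_mono he₁ h
    have h3 : pf e₁ u * pf e₂ v ≤ pf e₁ v * pf e₂ v :=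
      mul_le_mul_of_nonneg_right h2 (pf_nonneg e₂ v)
    rw [pf_mul] at h3
    have := pf_nonneg (e₁+e₂) u
    linarith

lemma key_ineq {s : ℝ} (hs0 : 0 < s) (hs1 : s ≤ 1) {x : ℝ} (hx : 0 ≤ x) :
    s * (x+1) ^ (s-1) ≤ (x+1) ^ s - x ^ s := by
  have hx1 : (0:ℝ) < x + 1 := by linarith
  have amgm := Real.geom_mean_le_arith_mean2_weighted hs0.le (by linarith : (0:ℝ) ≤ 1 - s) hx hx1.le (by ring)
  have h1 : x ^ s = x ^ s * (x+1) ^ (1-s) * (x+1) ^ (s-1) := by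
    rw [mul_assoc, ← Real.rpow_add hx1]; norm_num
  have h2 : (x+1) ^ s = (x+1) * (x+1) ^ (s-1) := by
    nth_rewrite 1 [show s = 1 + (s-1) by ring]
    rw [Real.rpow_add hx1, Real.rpow_one]
  have hp : (0:ℝ) < (x+1) ^ (s-1) := Real.rpow_pos_of_pos hx1 _
  rw [h1, h2]
  nlinarith [mul_le_mul_of_nonneg_right amgm hp.le]

lemma pf_sum_Icc {e : ℝ} (he1 : -1 < e) (he2 : e < 0) (N : ℕ) :
    ∑ r ∈ Icc (-(N:ℤ)) (N:ℤ), pf e r ≤ 2/(e+1) * ((N:ℝ)+1) ^ (e+1) := by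
  have hs0 : 0 < e + 1 := by linarith
  induction N with
  | zero =>
    simp only [Nat.cast_zero, neg_zero, Finset.Icc_self, Finset.sum_singleton]
    have : pf e 0 = 1 := by simp [pf]
    rw [this]
    have h1 : ((0:ℝ)+1) ^ (e+1) = 1 := by norm_num
    rw [h1, mul_one]
    rw [le_div_iff₀ hs0]; linarith
  | succ N ih =>
    have hset : Icc (-((N:ℤ)+1)) ((N:ℤ)+1)
        = insert (-((N:ℤ)+1)) (insert ((N:ℤ)+1) (Icc (-(N:ℤ)) (N:ℤ))) := by
      ext x; simp only [Finset.mem_Icc, Finset.mem_insert]; omega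
    have hcast : ((N+1:ℕ):ℤ) = (N:ℤ)+1 := by push_cast; ring
    rw [hcast, hset, Finset.sum_insert (by simp only [Finset.mem_insert, Finset.mem_Icc]; omega),
      Finset.sum_insert (by simp only [Finset.mem_Icc]; omega)]
    have hv : pf e (-((N:ℤ)+1)) = ((N:ℝ)+2) ^ e := by
      rw [pf]
      have hc : |((-( (N:ℤ)+1) : ℤ):ℝ)| = (N:ℝ)+1 := by
        push_cast
        rw [abs_neg, abs_of_nonneg (by positivity)]
      rw [hc]; congr 1; ring
    have hv2 : pf e ((N:ℤ)+1) = ((N:ℝ)+2) ^ e := by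
      rw [pf]
      have hc : |(((N:ℤ)+1 : ℤ):ℝ)| = (N:ℝ)+1 := by
        push_cast
        rw [abs_of_nonneg (by positivity)]
      rw [hc]; congr 1; ring
    rw [hv, hv2]
    have hkey := key_ineq hs0 (by linarith) (by positivity : (0:ℝ) ≤ (N:ℝ)+1)
    have hre : ((N:ℝ)+1+1) = (N:ℝ)+2 := by ring
    rw [hre] at hkey
    have hre2 : (e+1-1) = e := by ring
    rw [hre2] at hkey
    have hcast2 : ((N+1:ℕ):ℝ) = (N:ℝ)+1 := by push_cast; ring
    rw [hcast2]
    have hne : e + 1 ≠ 0 := by linarith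
    have h2 : 2 * ((N:ℝ)+2)^e ≤ 2/(e+1) * (((N:ℝ)+2)^(e+1) - ((N:ℝ)+1)^(e+1)) := by
      have step := mul_le_mul_of_nonneg_left hkey (by positivity : (0:ℝ) ≤ 2/(e+1))
      have heq : 2/(e+1) * ((e+1) * ((N:ℝ)+2)^e) = 2 * ((N:ℝ)+2)^e := by
        field_simp
      linarith [step, heq.ge]
    have hre3 : (N:ℝ)+1+1 = (N:ℝ)+2 := by ring
    rw [hre3]
    linarith

lemma pf_sum_window {e : ℝ} (M K : ℕ) (c : ℤ) (hc : |c| ≤ (K:ℤ)) :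
    ∑ q ∈ Icc (-(M:ℤ)) (M:ℤ), pf e (c - q)
      ≤ ∑ t ∈ Icc (-((M+K:ℕ):ℤ)) ((M+K:ℕ):ℤ), pf e t := by
  have himg : ∑ q ∈ Icc (-(M:ℤ)) (M:ℤ), pf e (c - q)
      = ∑ t ∈ (Icc (-(M:ℤ)) (M:ℤ)).image (fun q => c - q), pf e t := by
    rw [Finset.sum_image (by intro x _ y _ h; have h' : c - x = c - y := h; omega)]
  rw [himg]
  apply Finset.sum_le_sum_of_subset_of_nonneg
  · intro t ht
    simp only [Finset.mem_image, Finset.mem_Icc] at ht ⊢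
    obtain ⟨q, hq, rfl⟩ := ht
    rw [abs_le] at hc
    push_cast
    omega
  · intro t _ _; exact pf_nonneg e t

lemma pf_sum_window' {e : ℝ} (he1 : -1 < e) (he2 : e < 0) (M K : ℕ) (c : ℤ) (hc : |c| ≤ (K:ℤ)) :
    ∑ q ∈ Icc (-(M:ℤ)) (M:ℤ), pf e (c - q) ≤ 2/(e+1) * (((M+K:ℕ):ℝ)+1) ^ (e+1) :=
  (pf_sum_window M K c hc).trans (pf_sum_Icc he1 he2 (M+K))

lemma rpow_lin_bound {s : ℝ} (hs0 : 0 < s) (hs1 : s ≤ 1) {M : ℕ} (hM : 1 ≤ M)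
    (k : ℝ) (hk : 1 ≤ k) : (k*(M:ℝ)+1) ^ s ≤ (k+1) * (M:ℝ) ^ s := by
  have hM1 : (1:ℝ) ≤ (M:ℝ) := by exact_mod_cast hM
  have h1 : (k*(M:ℝ))+1 ≤ (k+1)*(M:ℝ) := by nlinarith
  calc (k*(M:ℝ)+1)^s ≤ ((k+1)*(M:ℝ))^s := Real.rpow_le_rpow (by positivity) h1 hs0.le
    _ = (k+1)^s * (M:ℝ)^s := Real.mul_rpow (by linarith) (by linarith)
    _ ≤ (k+1) * (M:ℝ)^s := by
        apply mul_le_mul_of_nonneg_right _ (Real.rpow_nonneg (by linarith) s)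
        calc (k+1)^s ≤ (k+1)^(1:ℝ) := Real.rpow_le_rpow_of_exponent_le (by linarith) hs1
          _ = k+1 := Real.rpow_one _

lemma pf_window_clean {e : ℝ} (he1 : -1 < e) (he2 : e < 0) {M : ℕ} (hM : 1 ≤ M)
    (k : ℕ) (hk : 1 ≤ k) (c : ℤ) (hc : |c| ≤ ((k:ℤ)-1)*(M:ℤ)) :
    ∑ q ∈ Icc (-(M:ℤ)) (M:ℤ), pf e (c - q) ≤ 2/(e+1) * ((k:ℝ)+1) * (M:ℝ) ^ (e+1) := by
  have hs0 : 0 < e+1 := by linarith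
  have hK : |c| ≤ (((k-1)*M : ℕ):ℤ) := by
    push_cast [Nat.cast_sub hk]; exact hc
  refine (pf_sum_window' he1 he2 M ((k-1)*M) c hK).trans ?_
  have hb : ((M+(k-1)*M : ℕ):ℝ) = (k:ℝ)*(M:ℝ) := by
    push_cast [Nat.cast_sub hk]; ring
  rw [hb]
  have hk' : (1:ℝ) ≤ (k:ℝ) := by exact_mod_cast hk
  have := rpow_lin_bound hs0 (by linarith) hM (k:ℝ) hk'
  calc 2/(e+1) * ((k:ℝ)*(M:ℝ)+1)^(e+1) ≤ 2/(e+1) * (((k:ℝ)+1) * (M:ℝ)^(e+1)) :=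
        mul_le_mul_of_nonneg_left this (by positivity)
    _ = 2/(e+1) * ((k:ℝ)+1) * (M:ℝ)^(e+1) := by ring

lemma pf_far {e : ℝ} (he1 : -1 ≤ e) (he2 : e ≤ 0) {t r : ℤ} (h : |r| + 1 ≤ 3*|t| + 3) :
    pf e t ≤ 3 * pf e r := by
  have hbr : ((|(r:ℝ)|)+1)/3 ≤ (|(t:ℝ)|)+1 := by
    have h' : ((|r|:ℤ):ℝ) + 1 ≤ 3*((|t|:ℤ):ℝ) + 3 := by exact_mod_cast h
    push_cast at h'
    linarith
  have h0r : (0:ℝ) < ((|(r:ℝ)|)+1)/3 := by positivity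
  have step1 : pf e t ≤ (((|(r:ℝ)|)+1)/3) ^ e :=
    Real.rpow_le_rpow_of_nonpos h0r hbr he2
  have step2 : (((|(r:ℝ)|)+1)/3) ^ e = ((|(r:ℝ)|)+1) ^ e / (3:ℝ) ^ e :=
    Real.div_rpow (by positivity) (by norm_num) e
  have h3e : (1/3 : ℝ) ≤ (3:ℝ) ^ e := by
    have := Real.rpow_le_rpow_of_exponent_le (by norm_num : (1:ℝ) ≤ 3) he1
    rw [Real.rpow_neg_one] at this
    linarith [this]
  have step3 : ((|(r:ℝ)|)+1) ^ e / (3:ℝ) ^ e ≤ ((|(r:ℝ)|)+1) ^ e / (1/3) :=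
    div_le_div_of_nonneg_left (Real.rpow_nonneg (by positivity) e) (by norm_num) h3e
  have step4 : ((|(r:ℝ)|)+1) ^ e / (1/3) = 3 * pf e r := by
    rw [pf]; field_simp
  calc pf e t ≤ (((|(r:ℝ)|)+1)/3) ^ e := step1
    _ = ((|(r:ℝ)|)+1) ^ e / (3:ℝ) ^ e := step2
    _ ≤ ((|(r:ℝ)|)+1) ^ e / (1/3) := step3
    _ = 3 * pf e r := step4

set_option maxHeartbeats 1000000 in
lemma core_bound (a b cc : ℝ) (hcc : cc = a + b)
    (ha1 : -1 < a) (ha2 : a < 0) (hb1 : -1 < b) (hb2 : b < 0) (hbc1 : -1 < b + cc) :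
    ∃ C : ℝ, 0 < C ∧ ∀ n M : ℕ, 1 ≤ M → M ≤ n →
      (n : ℝ)⁻¹ *
          ∑ p ∈ Icc (-(M:ℤ)) (M:ℤ), ∑ q ∈ Icc (-(M:ℤ)) (M:ℤ),
            ∑ r ∈ Icc (-(n:ℤ)+1) ((n:ℤ)-1),
              pf a r * pf b (r+p-q) * pf cc (r-p) * pf cc (r+q)
        ≤ C * ((M:ℝ) ^ (2*cc+3) * (n:ℝ)⁻¹ + (M:ℝ) ^ (2*cc+2) * (n:ℝ) ^ cc) := by
  have hc1 : -1 < cc := by linarith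
  have hc2 : cc < 0 := by rw [hcc]; linarith
  have hbc2 : b + cc < 0 := by linarith
  have hs2 : 0 < b + cc + 1 := by linarith
  have hs3 : 0 < cc + 1 := by linarith
  have hs4 : 0 < a + 1 := by linarith
  set cq : ℝ := 2 * (2/(b+cc+1) * 6) with hcq
  set cp : ℝ := 2/(cc+1) * 5 with hcp
  set cr : ℝ := 2/(a+1) * 4 with hcr
  set KA : ℝ := cr * cp * cq with hKA
  set KB : ℝ := 9 * 27 * (2/(cc+1) * 2) with hKB
  have hcq0 : 0 < cq := by rw [hcq]; positivity
  have hcp0 : 0 < cp := by rw [hcp]; positivity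
  have hcr0 : 0 < cr := by rw [hcr]; positivity
  have hKA0 : 0 < KA := by rw [hKA]; positivity
  have hKB0 : 0 < KB := by rw [hKB]; positivity
  refine ⟨KA + KB, by positivity, ?_⟩
  intro n M hM hMn
  have hn : 1 ≤ n := le_trans hM hMn
  have hM0 : (0:ℝ) < (M:ℝ) := by exact_mod_cast hM
  have hn0 : (0:ℝ) < (n:ℝ) := by exact_mod_cast hn
  have hM1 : (1:ℝ) ≤ (M:ℝ) := by exact_mod_cast hM
  have hn1 : (1:ℝ) ≤ (n:ℝ) := by exact_mod_cast hn
  set P : Finset ℤ := Icc (-(M:ℤ)) (M:ℤ) with hP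
  set R : Finset ℤ := Icc (-(n:ℤ)+1) ((n:ℤ)-1) with hR
  set RA : Finset ℤ := R.filter (fun r => |r| ≤ 3*(M:ℤ)) with hRA
  set RB : Finset ℤ := R.filter (fun r => ¬ |r| ≤ 3*(M:ℤ)) with hRB
  set F : ℤ → ℤ → ℤ → ℝ :=
    fun p q r => pf a r * pf b (r+p-q) * pf cc (r-p) * pf cc (r+q) with hF
  -- membership facts
  have memP : ∀ p ∈ P, |p| ≤ (M:ℤ) := by
    intro p hp; rw [hP, Finset.mem_Icc] at hp; exact abs_le.mpr hp
  have memRA : ∀ r ∈ RA, |r| ≤ 3*(M:ℤ) := by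
    intro r hr; rw [hRA, Finset.mem_filter] at hr; exact hr.2
  have memRB : ∀ r ∈ RB, 3*(M:ℤ) + 1 ≤ |r| := by
    intro r hr; rw [hRB, Finset.mem_filter] at hr; omega
  -- split
  have hsplit : ∑ p ∈ P, ∑ q ∈ P, ∑ r ∈ R, F p q r
      = (∑ p ∈ P, ∑ q ∈ P, ∑ r ∈ RA, F p q r)
        + (∑ p ∈ P, ∑ q ∈ P, ∑ r ∈ RB, F p q r) := by
    rw [← Finset.sum_add_distrib]
    refine Finset.sum_congr rfl fun p _ => ?_
    rw [← Finset.sum_add_distrib]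
    refine Finset.sum_congr rfl fun q _ => ?_
    exact (Finset.sum_filter_add_sum_filter_not R _ _).symm
  -- ===== Part A =====
  -- q-sum bound
  have hqsum : ∀ p ∈ P, ∀ r ∈ RA,
      ∑ q ∈ P, pf b (r+p-q) * pf cc (r+q) ≤ cq * (M:ℝ)^(b+cc+1) := by
    intro p hp r hr
    have hrp : |r + p| ≤ ((5:ℕ):ℤ) * (M:ℤ) - (M:ℤ) := by
      have t1 := abs_add_le r p
      have t2 := memP p hp
      have t3 := memRA r hr
      push_cast
      omega
    have hrr : |(-r)| ≤ ((5:ℕ):ℤ) * (M:ℤ) - (M:ℤ) := by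
      have t3 := memRA r hr
      rw [abs_neg]
      push_cast
      omega
    have step1 : ∀ q ∈ P, pf b (r+p-q) * pf cc (r+q)
        ≤ pf (b+cc) ((r+p)-q) + pf (b+cc) ((-r)-q) := by
      intro q _
      have h := pf_prod_le hb2.le hc2.le (r+p-q) (r+q)
      have e1 : r+p-q = (r+p)-q := by ring
      have e2 : pf (b+cc) (r+q) = pf (b+cc) ((-r)-q) := by
        rw [show (-r)-q = -(r+q) by ring, pf_neg]
      rw [e1, e2] at h
      exact h
    calc ∑ q ∈ P, pf b (r+p-q) * pf cc (r+q)
        ≤ ∑ q ∈ P, (pf (b+cc) ((r+p)-q) + pf (b+cc) ((-r)-q)) :=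
          Finset.sum_le_sum step1
      _ = (∑ q ∈ P, pf (b+cc) ((r+p)-q)) + ∑ q ∈ P, pf (b+cc) ((-r)-q) :=
          Finset.sum_add_distrib
      _ ≤ 2/(b+cc+1) * (((5:ℕ):ℝ)+1) * (M:ℝ)^(b+cc+1)
          + 2/(b+cc+1) * (((5:ℕ):ℝ)+1) * (M:ℝ)^(b+cc+1) := by
          apply add_le_add
          · exact pf_window_clean hbc1 hbc2 hM 5 (by norm_num) _ (by push_cast at hrp ⊢; omega)
          · exact pf_window_clean hbc1 hbc2 hM 5 (by norm_num) _ (by push_cast at hrr ⊢; omega)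
      _ = cq * (M:ℝ)^(b+cc+1) := by rw [hcq]; push_cast; ring
  -- p-sum bound
  have hpsum : ∀ r ∈ RA, ∑ p ∈ P, pf cc (r-p) ≤ cp * (M:ℝ)^(cc+1) := by
    intro r hr
    have hrb : |r| ≤ (((4:ℕ):ℤ)-1) * (M:ℤ) := by
      have := memRA r hr; push_cast; omega
    have := pf_window_clean hc1 hc2 hM 4 (by norm_num) r hrb
    calc ∑ p ∈ P, pf cc (r-p) ≤ 2/(cc+1) * (((4:ℕ):ℝ)+1) * (M:ℝ)^(cc+1) := this
      _ = cp * (M:ℝ)^(cc+1) := by rw [hcp]; push_cast; ring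
  -- r-sum bound
  have hrsum : ∑ r ∈ RA, pf a r ≤ cr * (M:ℝ)^(a+1) := by
    have hsub : RA ⊆ Icc (-((3*M:ℕ):ℤ)) ((3*M:ℕ):ℤ) := by
      intro r hr
      have := memRA r hr
      rw [abs_le] at this
      rw [Finset.mem_Icc]
      push_cast
      omega
    calc ∑ r ∈ RA, pf a r ≤ ∑ r ∈ Icc (-((3*M:ℕ):ℤ)) ((3*M:ℕ):ℤ), pf a r :=
          Finset.sum_le_sum_of_subset_of_nonneg hsub (fun t _ _ => pf_nonneg a t)
      _ ≤ 2/(a+1) * (((3*M:ℕ):ℝ)+1) ^ (a+1) := pf_sum_Icc ha1 ha2 (3*M)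
      _ ≤ 2/(a+1) * (((3:ℝ)+1) * (M:ℝ)^(a+1)) := by
          apply mul_le_mul_of_nonneg_left _ (by positivity)
          have := rpow_lin_bound hs4 (by linarith) hM (3:ℝ) (by norm_num)
          have hcast : ((3*M:ℕ):ℝ) = 3*(M:ℝ) := by push_cast; ring
          rw [hcast]
          exact this
      _ = cr * (M:ℝ)^(a+1) := by rw [hcr]; ring
  -- assemble A
  have hA : ∑ p ∈ P, ∑ q ∈ P, ∑ r ∈ RA, F p q r
      ≤ KA * (M:ℝ)^((a+1)+(cc+1)+(b+cc+1)) := by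
    have stepq : ∑ p ∈ P, ∑ q ∈ P, ∑ r ∈ RA, F p q r
        ≤ ∑ p ∈ P, ∑ r ∈ RA, (pf a r * pf cc (r-p)) * (cq * (M:ℝ)^(b+cc+1)) := by
      refine Finset.sum_le_sum fun p hp => ?_
      rw [Finset.sum_comm]
      refine Finset.sum_le_sum fun r hr => ?_
      have heq : ∑ q ∈ P, F p q r
          = (pf a r * pf cc (r-p)) * ∑ q ∈ P, pf b (r+p-q) * pf cc (r+q) := by
        rw [Finset.mul_sum]
        refine Finset.sum_congr rfl fun q _ => ?_
        rw [hF]; ring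
      rw [heq]
      exact mul_le_mul_of_nonneg_left (hqsum p hp r hr)
        (mul_nonneg (pf_nonneg a r) (pf_nonneg cc (r-p)))
    have stepp : ∑ p ∈ P, ∑ r ∈ RA, (pf a r * pf cc (r-p)) * (cq * (M:ℝ)^(b+cc+1))
        ≤ (∑ r ∈ RA, pf a r * (cp * (M:ℝ)^(cc+1))) * (cq * (M:ℝ)^(b+cc+1)) := by
      have hre : ∑ p ∈ P, ∑ r ∈ RA, (pf a r * pf cc (r-p)) * (cq * (M:ℝ)^(b+cc+1))
          = (∑ r ∈ RA, pf a r * (∑ p ∈ P, pf cc (r-p))) * (cq * (M:ℝ)^(b+cc+1)) := by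
        rw [Finset.sum_comm]
        calc ∑ y ∈ RA, ∑ x ∈ P, (pf a y * pf cc (y-x)) * (cq * (M:ℝ)^(b+cc+1))
            = ∑ y ∈ RA, (pf a y * ∑ x ∈ P, pf cc (y-x)) * (cq * (M:ℝ)^(b+cc+1)) := by
              refine Finset.sum_congr rfl fun y _ => ?_
              rw [← Finset.sum_mul, ← Finset.mul_sum]
          _ = (∑ r ∈ RA, pf a r * (∑ p ∈ P, pf cc (r-p))) * (cq * (M:ℝ)^(b+cc+1)) := by
              rw [← Finset.sum_mul]
      rw [hre]
      apply mul_le_mul_of_nonneg_right _ (by positivity)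
      refine Finset.sum_le_sum fun r hr => ?_
      exact mul_le_mul_of_nonneg_left (hpsum r hr) (pf_nonneg a r)
    have stepr : (∑ r ∈ RA, pf a r * (cp * (M:ℝ)^(cc+1))) * (cq * (M:ℝ)^(b+cc+1))
        ≤ (cr * (M:ℝ)^(a+1) * (cp * (M:ℝ)^(cc+1))) * (cq * (M:ℝ)^(b+cc+1)) := by
      apply mul_le_mul_of_nonneg_right _ (by positivity)
      rw [← Finset.sum_mul]
      exact mul_le_mul_of_nonneg_right hrsum (by positivity)
    have hfin : (cr * (M:ℝ)^(a+1) * (cp * (M:ℝ)^(cc+1))) * (cq * (M:ℝ)^(b+cc+1))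
        = KA * (M:ℝ)^((a+1)+(cc+1)+(b+cc+1)) := by
      have hsp : (M:ℝ)^((a+1)+(cc+1)+(b+cc+1))
          = (M:ℝ)^(a+1) * (M:ℝ)^(cc+1) * (M:ℝ)^(b+cc+1) := by
        rw [Real.rpow_add hM0, Real.rpow_add hM0]
      rw [hKA, hsp]
      ring
    calc ∑ p ∈ P, ∑ q ∈ P, ∑ r ∈ RA, F p q r
        ≤ _ := stepq
      _ ≤ _ := stepp
      _ ≤ _ := stepr
      _ = KA * (M:ℝ)^((a+1)+(cc+1)+(b+cc+1)) := hfin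
  -- ===== Part B =====
  have hBpoint : ∀ p ∈ P, ∀ q ∈ P, ∀ r ∈ RB,
      F p q r ≤ 27 * ((M:ℝ)^(2*cc) * pf cc r) := by
    intro p hp q hq r hr
    have hp' := memP p hp
    have hq' := memP q hq
    have hr' := memRB r hr
    have h1 : pf b (r+p-q) ≤ 3 * pf b r := by
      apply pf_far hb1.le hb2.le
      have t1 : |r| ≤ |r+p-q| + |q-p| := by
        have := abs_add_le (r+p-q) (q-p); simpa using this
      have t2 : |q-p| ≤ |q| + |p| := abs_sub q p
      omega
    have h2 : pf cc (r-p) ≤ 3 * pf cc r := by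
      apply pf_far hc1.le hc2.le
      have t1 : |r| ≤ |r-p| + |p| := by
        have := abs_add_le (r-p) p; simpa using this
      omega
    have h3 : pf cc (r+q) ≤ 3 * pf cc r := by
      apply pf_far hc1.le hc2.le
      have t1 : |r| ≤ |r+q| + |q| := by
        have := abs_add_le (r+q) (-q); simpa using this
      omega
    have hprod : F p q r ≤ pf a r * (3*pf b r) * (3*pf cc r) * (3*pf cc r) := by
      rw [hF]
      have e1 : pf a r * pf b (r+p-q) ≤ pf a r * (3*pf b r) :=
        mul_le_mul_of_nonneg_left h1 (pf_nonneg a r)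
      have e2 : pf a r * pf b (r+p-q) * pf cc (r-p) ≤ pf a r * (3*pf b r) * (3*pf cc r) :=
        mul_le_mul e1 h2 (pf_nonneg cc (r-p))
          (mul_nonneg (pf_nonneg a r) (by linarith [pf_nonneg b r]))
      exact mul_le_mul e2 h3 (pf_nonneg cc (r+q))
        (by
          have n1 := pf_nonneg a r; have n2 := pf_nonneg b r; have n3 := pf_nonneg cc r
          positivity)
    have hcomb : pf a r * (3*pf b r) * (3*pf cc r) * (3*pf cc r)
        = 27 * (pf (2*cc) r * pf cc r) := by
      have e1 : pf a r * pf b r = pf (a+b) r := pf_mul a b r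
      have e2 : pf cc r * pf cc r = pf (cc+cc) r := pf_mul cc cc r
      have e3 : pf (a+b) r * pf (cc+cc) r = pf ((a+b)+(cc+cc)) r := pf_mul _ _ r
      have e4 : pf ((a+b)+(cc+cc)) r = pf (2*cc) r * pf cc r := by
        rw [pf_mul]
        congr 1
        rw [← hcc]; ring
      calc pf a r * (3*pf b r) * (3*pf cc r) * (3*pf cc r)
          = 27 * ((pf a r * pf b r) * (pf cc r * pf cc r)) := by ring
        _ = 27 * (pf (a+b) r * pf (cc+cc) r) := by rw [e1, e2]
        _ = 27 * (pf (2*cc) r * pf cc r) := by rw [e3, e4]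
    have hMr : pf (2*cc) r ≤ (M:ℝ)^(2*cc) := by
      rw [pf]
      apply Real.rpow_le_rpow_of_nonpos hM0 _ (by linarith)
      have : (3*(M:ℤ)+1 : ℝ) ≤ |(r:ℝ)| := by
        have := memRB r hr
        have c1 : ((3*(M:ℤ)+1 : ℤ):ℝ) ≤ ((|r| : ℤ):ℝ) := by exact_mod_cast this
        push_cast at c1 ⊢
        linarith
      push_cast at this
      linarith
    calc F p q r ≤ pf a r * (3*pf b r) * (3*pf cc r) * (3*pf cc r) := hprod
      _ = 27 * (pf (2*cc) r * pf cc r) := hcomb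
      _ ≤ 27 * ((M:ℝ)^(2*cc) * pf cc r) := by
          apply mul_le_mul_of_nonneg_left _ (by norm_num)
          exact mul_le_mul_of_nonneg_right hMr (pf_nonneg cc r)
  have hBr : ∑ r ∈ RB, pf cc r ≤ 2/(cc+1) * 2 * (n:ℝ)^(cc+1) := by
    have hsub : RB ⊆ Icc (-((n:ℕ):ℤ)) ((n:ℕ):ℤ) := by
      intro r hr
      rw [hRB, Finset.mem_filter, hR, Finset.mem_Icc] at hr
      rw [Finset.mem_Icc]
      omega
    calc ∑ r ∈ RB, pf cc r ≤ ∑ r ∈ Icc (-((n:ℕ):ℤ)) ((n:ℕ):ℤ), pf cc r :=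
          Finset.sum_le_sum_of_subset_of_nonneg hsub (fun t _ _ => pf_nonneg cc t)
      _ ≤ 2/(cc+1) * ((n:ℝ)+1) ^ (cc+1) := pf_sum_Icc hc1 hc2 n
      _ ≤ 2/(cc+1) * 2 * (n:ℝ)^(cc+1) := by
          have := rpow_lin_bound hs3 (by linarith) hn (1:ℝ) (by norm_num)
          rw [one_mul] at this
          calc 2/(cc+1) * ((n:ℝ)+1) ^ (cc+1)
              ≤ 2/(cc+1) * ((1+1) * (n:ℝ)^(cc+1)) :=
                mul_le_mul_of_nonneg_left this (by positivity)
            _ = 2/(cc+1) * 2 * (n:ℝ)^(cc+1) := by ring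
  have hcardP : ((P.card : ℝ)) ≤ 3*(M:ℝ) := by
    have : P.card = 2*M+1 := by
      rw [hP, Int.card_Icc]
      omega
    rw [this]
    push_cast
    linarith
  have hB : ∑ p ∈ P, ∑ q ∈ P, ∑ r ∈ RB, F p q r
      ≤ KB * ((M:ℝ) * ((M:ℝ) * (M:ℝ)^(2*cc))) * (n:ℝ)^(cc+1) := by
    have hinner : ∀ p ∈ P, ∀ q ∈ P, ∑ r ∈ RB, F p q r
        ≤ 27 * (M:ℝ)^(2*cc) * (2/(cc+1) * 2 * (n:ℝ)^(cc+1)) := by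
      intro p hp q hq
      calc ∑ r ∈ RB, F p q r ≤ ∑ r ∈ RB, 27 * ((M:ℝ)^(2*cc) * pf cc r) :=
            Finset.sum_le_sum (fun r hr => hBpoint p hp q hq r hr)
        _ = 27 * (M:ℝ)^(2*cc) * ∑ r ∈ RB, pf cc r := by
            rw [Finset.mul_sum]
            refine Finset.sum_congr rfl fun r _ => by ring
        _ ≤ 27 * (M:ℝ)^(2*cc) * (2/(cc+1) * 2 * (n:ℝ)^(cc+1)) :=
            mul_le_mul_of_nonneg_left hBr (by positivity)
    set B1 : ℝ := 27 * (M:ℝ)^(2*cc) * (2/(cc+1) * 2 * (n:ℝ)^(cc+1)) with hB1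
    have hB10 : 0 ≤ B1 := by rw [hB1]; positivity
    have houter : ∑ p ∈ P, ∑ q ∈ P, ∑ r ∈ RB, F p q r ≤ (P.card : ℝ) * ((P.card : ℝ) * B1) := by
      calc ∑ p ∈ P, ∑ q ∈ P, ∑ r ∈ RB, F p q r
          ≤ ∑ p ∈ P, (P.card : ℝ) * B1 := by
            refine Finset.sum_le_sum fun p hp => ?_
            calc ∑ q ∈ P, ∑ r ∈ RB, F p q r ≤ ∑ q ∈ P, B1 :=
                  Finset.sum_le_sum (fun q hq => hinner p hp q hq)
              _ = (P.card : ℝ) * B1 := by rw [Finset.sum_const, nsmul_eq_mul]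
        _ = (P.card : ℝ) * ((P.card : ℝ) * B1) := by
            rw [Finset.sum_const, nsmul_eq_mul]
    calc ∑ p ∈ P, ∑ q ∈ P, ∑ r ∈ RB, F p q r
        ≤ (P.card : ℝ) * ((P.card : ℝ) * B1) := houter
      _ ≤ (3*(M:ℝ)) * ((3*(M:ℝ)) * B1) := by
          apply mul_le_mul hcardP _ (by positivity) (by positivity)
          exact mul_le_mul hcardP le_rfl hB10 (by positivity)
      _ = KB * ((M:ℝ) * ((M:ℝ) * (M:ℝ)^(2*cc))) * (n:ℝ)^(cc+1) := by
          rw [hKB, hB1]; ring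
  -- ===== combine =====
  rw [hsplit, mul_add]
  have hMexpA : (M:ℝ)^((a+1)+(cc+1)+(b+cc+1)) ≤ (M:ℝ)^(2*cc+3) := by
    apply Real.rpow_le_rpow_of_exponent_le hM1
    rw [hcc]; linarith
  have hMexpB : (M:ℝ) * ((M:ℝ) * (M:ℝ)^(2*cc)) = (M:ℝ)^(2*cc+2) := by
    have : (M:ℝ)^(2*cc+2) = (M:ℝ)^(1:ℝ) * ((M:ℝ)^(1:ℝ) * (M:ℝ)^(2*cc)) := by
      rw [← Real.rpow_add hM0, ← Real.rpow_add hM0]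
      congr 1
      ring
    rw [this, Real.rpow_one]
  have hnexp : (n:ℝ)⁻¹ * (n:ℝ)^(cc+1) = (n:ℝ)^cc := by
    rw [← Real.rpow_neg_one, ← Real.rpow_add hn0]
    congr 1
    ring
  have hinv0 : (0:ℝ) ≤ (n:ℝ)⁻¹ := by positivity
  have htermA : (n:ℝ)⁻¹ * ∑ p ∈ P, ∑ q ∈ P, ∑ r ∈ RA, F p q r
      ≤ KA * ((M:ℝ)^(2*cc+3) * (n:ℝ)⁻¹) := by
    calc (n:ℝ)⁻¹ * ∑ p ∈ P, ∑ q ∈ P, ∑ r ∈ RA, F p q r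
        ≤ (n:ℝ)⁻¹ * (KA * (M:ℝ)^((a+1)+(cc+1)+(b+cc+1))) :=
          mul_le_mul_of_nonneg_left hA hinv0
      _ ≤ (n:ℝ)⁻¹ * (KA * (M:ℝ)^(2*cc+3)) := by
          apply mul_le_mul_of_nonneg_left _ hinv0
          exact mul_le_mul_of_nonneg_left hMexpA hKA0.le
      _ = KA * ((M:ℝ)^(2*cc+3) * (n:ℝ)⁻¹) := by ring
  have htermB : (n:ℝ)⁻¹ * ∑ p ∈ P, ∑ q ∈ P, ∑ r ∈ RB, F p q r
      ≤ KB * ((M:ℝ)^(2*cc+2) * (n:ℝ)^cc) := by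
    calc (n:ℝ)⁻¹ * ∑ p ∈ P, ∑ q ∈ P, ∑ r ∈ RB, F p q r
        ≤ (n:ℝ)⁻¹ * (KB * ((M:ℝ) * ((M:ℝ) * (M:ℝ)^(2*cc))) * (n:ℝ)^(cc+1)) :=
          mul_le_mul_of_nonneg_left hB hinv0
      _ = KB * ((M:ℝ) * ((M:ℝ) * (M:ℝ)^(2*cc))) * ((n:ℝ)⁻¹ * (n:ℝ)^(cc+1)) := by ring
      _ = KB * ((M:ℝ)^(2*cc+2) * (n:ℝ)^cc) := by rw [hMexpB, hnexp]; ring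
  have hx0 : (0:ℝ) ≤ (M:ℝ)^(2*cc+3) * (n:ℝ)⁻¹ := by positivity
  have hy0 : (0:ℝ) ≤ (M:ℝ)^(2*cc+2) * (n:ℝ)^cc := by positivity
  nlinarith [htermA, htermB, hKA0, hKB0, hx0, hy0]

/-- the bound for the connected-diagram term
`γ_xx(r)γ_εε(r+q-p)γ_xε²(r+q)γ_εx²(r-p)` (Figure 7) in Part III of the proof of
Lemma 1, for `1/3 < d_x, d_ε < 1/2`. -/
theorem figure7_diagram_bound (dx dε : ℝ)
    (hdx1 : 1 / 3 < dx) (hdx2 : dx < 1 / 2) (hdε1 : 1 / 3 < dε) (hdε2 : dε < 1 / 2) :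
    ∃ C : ℝ, 0 < C ∧ ∀ n M : ℕ, 1 ≤ M → M ≤ n →
      (n : ℝ)⁻¹ *
          ∑ p ∈ Finset.Icc (-(M : ℤ)) (M : ℤ),
            ∑ q ∈ Finset.Icc (-(M : ℤ)) (M : ℤ),
              ∑ r ∈ Finset.Icc (-(n : ℤ) + 1) ((n : ℤ) - 1),
                ((|r| : ℝ) + 1) ^ (2 * dx - 1) *
                  ((|r + p - q| : ℝ) + 1) ^ (2 * dε - 1) *
                  ((|r - p| : ℝ) + 1) ^ (2 * (dx + dε - 1)) *
                  ((|r + q| : ℝ) + 1) ^ (2 * (dx + dε - 1))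
        ≤ C * ((M : ℝ) ^ (4 * dx + 4 * dε - 1) * (n : ℝ)⁻¹ +
            (M : ℝ) ^ (4 * dx + 4 * dε - 2) * (n : ℝ) ^ (2 * dx + 2 * dε - 2)) := by
  obtain ⟨C, hC0, hC⟩ := core_bound (2*dx-1) (2*dε-1) (2*(dx+dε-1)) (by ring)
    (by linarith) (by linarith) (by linarith) (by linarith) (by linarith)
  refine ⟨C, hC0, ?_⟩
  intro n M hM hMn
  have h := hC n M hM hMn
  simp only [pf] at h
  rw [show (4*dx+4*dε-1 : ℝ) = 2*(2*(dx+dε-1))+3 by ring,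
    show (4*dx+4*dε-2 : ℝ) = 2*(2*(dx+dε-1))+2 by ring,
    show (2*dx+2*dε-2 : ℝ) = 2*(dx+dε-1) by ring]
  push_cast at h
  exact h
end
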